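/- arXiv:1403.1845 — 3 statements merged into one kernel-verified Lean document; each statement's English description precedes it below -/
import Mathlib

section
/- Let a and b be positive integers and let μ ∈ R(a,b) have frontier w_1 w_2…w_{a+b} with levels l_0, l_1, …, l_{a+b}. Then h⁻_{b,a}(μ) equals the number of pairs (i,j) with 1 ≤ i < j ≤ a+b, w_i = E, w_j = N, and 1 ≤ l_j − l_i ≤ a+b. -/
/-- `μ : ℕ → ℕ` represents a partition in `R(a,b)`: the value `μ i` is the
`(i+1)`-th part; the parts are weakly decreasing, at most `b`, and zero from
index `a` on (so the Young diagram of `μ` fits in an `a × b` box). -/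
def InBox (a b : ℕ) (μ : ℕ → ℕ) : Prop :=
  (∀ i j : ℕ, i ≤ j → μ j ≤ μ i) ∧ μ 0 ≤ b ∧ ∀ i, a ≤ i → μ i = 0

/-- `μ ∈ D(a,b)`: `μ ∈ R(a,b)` and `a·μ_j ≤ b·(a−j)` for all (1-indexed) `j`;
in terms of the 0-indexed parts this reads `a·μ(i) ≤ b·(a−1−i)`. -/
def InTriangle (a b : ℕ) (μ : ℕ → ℕ) : Prop :=
  InBox a b μ ∧ ∀ i, i < a → a * μ i ≤ b * (a - 1 - i)

/-- The leg of the cell in (0-indexed) row `i`, column `j` of the Young diagram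
of `μ`: the number of cells strictly below it in its column. -/
noncomputable def leg (μ : ℕ → ℕ) (i j : ℕ) : ℕ :=
  {i' : ℕ | i < i' ∧ j < μ i'}.ncard

/-- The arm of the cell in row `i`, column `j` (as an integer): the number of
cells strictly to its right in its row. -/
def armZ (μ : ℕ → ℕ) (i j : ℕ) : ℤ := (μ i : ℤ) - 1 - j

/-- `h⁺_{b,a}(μ)`: the number of cells `c` of `μ` with
`−a < a·arm(c) − b·leg(c) ≤ b`. -/
noncomputable def hplus (a b : ℕ) (μ : ℕ → ℕ) : ℕ :=
  {c : ℕ × ℕ | c.2 < μ c.1 ∧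
    -(a : ℤ) < (a : ℤ) * armZ μ c.1 c.2 - (b : ℤ) * leg μ c.1 c.2 ∧
    (a : ℤ) * armZ μ c.1 c.2 - (b : ℤ) * leg μ c.1 c.2 ≤ (b : ℤ)}.ncard

/-- The frontier of `μ ∈ R(a,b)`: the lattice word from `(0,0)` to `(b,a)`
(`true` = N, `false` = E) tracing the boundary of the diagram of `μ` inside the
`a × b` box; its `j`-th N (from the start) is preceded by exactly `μ_{a+1−j}` E's. -/
def frontierWord (a b : ℕ) (μ : ℕ → ℕ) : List Bool :=
  ((List.range a).flatMap fun y =>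
    List.replicate (μ (a - 1 - y) - μ (a - y)) false ++ [true]) ++
  List.replicate (b - μ 0) false

/-- The level `l_i = b·(#N) − a·(#E)` of the lattice point reached after the
first `i` steps of the word `w` (with `true` = N, `false` = E). -/
def levelAt (a b : ℕ) (w : List Bool) (i : ℕ) : ℤ :=
  (b : ℤ) * (w.take i).count true - (a : ℤ) * (w.take i).count false

/-- `ml_{b,a}`: the minimum of the levels `l_0, l_1, …, l_{length w}` along `w`. -/
def minLevel (a b : ℕ) (w : List Bool) : ℤ :=
  ((Finset.range (w.length + 1)).image fun i => levelAt a b w i).min'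
    (Finset.Nonempty.image Finset.nonempty_range_add_one _)

/-- `h⁻_{b,a}(μ)`: the number of cells `c` of `μ` with
`−a ≤ a·arm(c) − b·leg(c) < b`. -/
noncomputable def hminus (a b : ℕ) (μ : ℕ → ℕ) : ℕ :=
  {c : ℕ × ℕ | c.2 < μ c.1 ∧
    -(a : ℤ) ≤ (a : ℤ) * armZ μ c.1 c.2 - (b : ℤ) * leg μ c.1 c.2 ∧
    (a : ℤ) * armZ μ c.1 c.2 - (b : ℤ) * leg μ c.1 c.2 < (b : ℤ)}.ncard

def gcnt (a : ℕ) (μ : ℕ → ℕ) (c : ℕ) : ℕ :=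
  ((Finset.range a).filter fun k => μ (a - 1 - k) ≤ c).card

def ePos (a : ℕ) (μ : ℕ → ℕ) (c : ℕ) : ℕ := c + gcnt a μ c

def nPos (a : ℕ) (μ : ℕ → ℕ) (y : ℕ) : ℕ := y + μ (a - 1 - y)

lemma st10_count_tf (l : List Bool) : l.count true + l.count false = l.length := by
  induction l with
  | nil => simp
  | cons x l ih => cases x <;> simp [List.count_cons] <;> omega

lemma st10_card_filter_getElem (l : List Bool) (x : Bool) :
    ((Finset.range l.length).filter fun p => l[p]? = some x).card = l.count x := by
  induction l with
  | nil => simp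
  | cons y l ih =>
    rw [Finset.card_filter] at ih ⊢
    rw [List.length_cons, Finset.sum_range_succ']
    simp only [List.getElem?_cons_succ, List.getElem?_cons_zero, ih, List.count_cons]
    by_cases h : y = x <;> simp [h]

lemma st10_pref (a : ℕ) (μ : ℕ → ℕ) (hmono : ∀ i j : ℕ, i ≤ j → μ j ≤ μ i)
    (hzero : ∀ i, a ≤ i → μ i = 0) :
    ∀ y, y ≤ a →
      ((List.range y).flatMap fun k =>
        List.replicate (μ (a-1-k) - μ (a-k)) false ++ [true]).count true = y ∧
      ((List.range y).flatMap fun k =>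
        List.replicate (μ (a-1-k) - μ (a-k)) false ++ [true]).count false = μ (a - y) := by
  intro y
  induction y with
  | zero => intro _; simp [hzero a le_rfl]
  | succ y ih =>
    intro h
    obtain ⟨h1, h2⟩ := ih (by omega)
    rw [List.range_succ, List.flatMap_append, List.flatMap_cons, List.flatMap_nil]
    have hm : μ (a - y) ≤ μ (a - 1 - y) := hmono (a-1-y) (a-y) (by omega)
    have he : a - (y+1) = a - 1 - y := by omega
    constructor
    · simp [List.count_append, h1, List.count_replicate]
    · have he2 : μ (a - (y+1)) = μ (a - 1 - y) := by rw [he]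
      simp [List.count_append, h2, List.count_replicate]
      omega
lemma st10_decomp_N (a b : ℕ) (μ : ℕ → ℕ) (hmono : ∀ i j : ℕ, i ≤ j → μ j ≤ μ i)
    (hzero : ∀ i, a ≤ i → μ i = 0) {y : ℕ} (hy : y < a) :
    ∃ W1 W2 : List Bool, frontierWord a b μ = W1 ++ true :: W2 ∧
      W1.length = nPos a μ y ∧ W1.count true = y := by
  have hr : List.range a = (List.range y ++ [y]) ++
      (List.range (a - (y+1))).map (fun x => (y+1) + x) := by
    rw [show a = (y+1) + (a - (y+1)) from by omega, List.range_add, List.range_succ]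
    simp
  obtain ⟨h1, h2⟩ := st10_pref a μ hmono hzero y (by omega)
  have hm : μ (a - y) ≤ μ (a - 1 - y) := hmono (a-1-y) (a-y) (by omega)
  have hlP : ((List.range y).flatMap fun k =>
      List.replicate (μ (a-1-k) - μ (a-k)) false ++ [true]).length = y + μ (a - y) := by
    rw [← st10_count_tf, h1, h2]
  refine ⟨((List.range y).flatMap fun k =>
      List.replicate (μ (a-1-k) - μ (a-k)) false ++ [true]) ++
      List.replicate (μ (a-1-y) - μ (a-y)) false,
      (((List.range (a - (y+1))).map (fun x => (y+1) + x)).flatMap fun k =>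
        List.replicate (μ (a-1-k) - μ (a-k)) false ++ [true]) ++
        List.replicate (b - μ 0) false, ?_, ?_, ?_⟩
  · unfold frontierWord
    rw [hr, List.flatMap_append, List.flatMap_append, List.flatMap_cons, List.flatMap_nil]
    simp [List.append_assoc]
  · rw [List.length_append, hlP, List.length_replicate, nPos]
    omega
  · rw [List.count_append, h1, List.count_replicate]
    simp
lemma st10_word_counts (a b : ℕ) (μ : ℕ → ℕ) (hmono : ∀ i j : ℕ, i ≤ j → μ j ≤ μ i)
    (hzero : ∀ i, a ≤ i → μ i = 0) (hb' : μ 0 ≤ b) :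
    (frontierWord a b μ).count true = a ∧ (frontierWord a b μ).count false = b ∧
    (frontierWord a b μ).length = a + b := by
  obtain ⟨h1, h2⟩ := st10_pref a μ hmono hzero a le_rfl
  have e1 : (frontierWord a b μ).count true = a := by
    rw [frontierWord, List.count_append, h1, List.count_replicate]; simp
  have e2 : (frontierWord a b μ).count false = b := by
    rw [frontierWord, List.count_append, h2, List.count_replicate]
    simp only [Nat.sub_self] at h2 ⊢
    simp
    omega
  exact ⟨e1, e2, by rw [← st10_count_tf, e1, e2]⟩

lemma st10_decomp_E (a b : ℕ) (μ : ℕ → ℕ) (ha : 0 < a)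
    (hmono : ∀ i j : ℕ, i ≤ j → μ j ≤ μ i)
    (hzero : ∀ i, a ≤ i → μ i = 0) (hb' : μ 0 ≤ b) {c : ℕ} (hc : c < b) :
    ∃ W1 W2 : List Bool, frontierWord a b μ = W1 ++ false :: W2 ∧
      W1.length = ePos a μ c ∧ W1.count true = gcnt a μ c := by
  obtain ⟨hP1, hP2⟩ := st10_pref a μ hmono hzero a le_rfl
  by_cases h0 : μ 0 ≤ c
  · -- far east, in the final replicate block
    have hg : gcnt a μ c = a := by
      rw [gcnt, Finset.filter_true_of_mem, Finset.card_range]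
      intro k _
      exact le_trans (hmono 0 (a-1-k) (by omega)) h0
    have hsplit : b - μ 0 = (c - μ 0) + ((b - c - 1) + 1) := by omega
    refine ⟨((List.range a).flatMap fun k =>
        List.replicate (μ (a-1-k) - μ (a-k)) false ++ [true]) ++
        List.replicate (c - μ 0) false,
        List.replicate (b - c - 1) false, ?_, ?_, ?_⟩
    · rw [frontierWord, hsplit, List.replicate_add, List.replicate_succ]
      simp [List.append_assoc]
    · have hlP : ((List.range a).flatMap fun k =>
          List.replicate (μ (a-1-k) - μ (a-k)) false ++ [true]).length = a + μ 0 := by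
        rw [← st10_count_tf, hP1, hP2, Nat.sub_self]
      rw [List.length_append, hlP, List.length_replicate, ePos, hg]
      omega
    · rw [List.count_append, hP1, List.count_replicate, hg]
      simp
  · -- inside block m
    push_neg at h0
    have hex : ∃ k, c < μ (a - 1 - k) := ⟨a - 1, by simpa [Nat.sub_sub_self (by omega : 1 ≤ a)] using h0⟩
    set m := Nat.find hex with hm
    have hPm : c < μ (a - 1 - m) := Nat.find_spec hex
    have hma : m < a := by
      have := Nat.find_min' hex (m := a - 1) (by simpa [Nat.sub_sub_self (by omega : 1 ≤ a)] using h0)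
      omega
    have hlow : μ (a - m) ≤ c := by
      rcases Nat.eq_zero_or_pos m with h | h
      · rw [h, Nat.sub_zero, hzero a le_rfl]; omega
      · have := Nat.find_min hex (m := m - 1) (by omega)
        push_neg at this
        have heq : a - 1 - (m - 1) = a - m := by omega
        rwa [heq] at this
    have hg : gcnt a μ c = m := by
      rw [gcnt, show (Finset.range a).filter (fun k => μ (a - 1 - k) ≤ c) = Finset.range m from ?_,
        Finset.card_range]
      ext k
      simp only [Finset.mem_filter, Finset.mem_range]
      constructor
      · rintro ⟨hka, hkc⟩
        by_contra hkm
        push_neg at hkm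
        exact absurd (le_trans (hmono (a-1-k) (a-1-m) (by omega)) hkc) (by omega)
      · intro hkm
        refine ⟨by omega, ?_⟩
        have := Nat.find_min hex hkm
        push_neg at this
        exact this
    obtain ⟨h1, h2⟩ := st10_pref a μ hmono hzero m (by omega)
    have hmm : μ (a - m) ≤ μ (a - 1 - m) := hmono (a-1-m) (a-m) (by omega)
    have hsplit : μ (a-1-m) - μ (a-m) = (c - μ (a-m)) + ((μ (a-1-m) - c - 1) + 1) := by omega
    have hr : List.range a = (List.range m ++ [m]) ++
        (List.range (a - (m+1))).map (fun x => (m+1) + x) := by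
      rw [show a = (m+1) + (a - (m+1)) from by omega, List.range_add, List.range_succ]
      simp
    have hlP : ((List.range m).flatMap fun k =>
        List.replicate (μ (a-1-k) - μ (a-k)) false ++ [true]).length = m + μ (a - m) := by
      rw [← st10_count_tf, h1, h2]
    refine ⟨((List.range m).flatMap fun k =>
        List.replicate (μ (a-1-k) - μ (a-k)) false ++ [true]) ++
        List.replicate (c - μ (a - m)) false,
        (List.replicate (μ (a-1-m) - c - 1) false ++ [true] ++
          (((List.range (a - (m+1))).map (fun x => (m+1) + x)).flatMap fun k =>
            List.replicate (μ (a-1-k) - μ (a-k)) false ++ [true])) ++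
          List.replicate (b - μ 0) false, ?_, ?_, ?_⟩
    · rw [frontierWord, hr, List.flatMap_append, List.flatMap_append, List.flatMap_cons,
        List.flatMap_nil, hsplit, List.replicate_add, List.replicate_succ]
      simp [List.append_assoc]
    · rw [List.length_append, hlP, List.length_replicate, ePos, hg]
      omega
    · rw [List.count_append, h1, List.count_replicate, hg]
      simp
lemma st10_getElem_of_decomp {W1 W2 : List Bool} {x : Bool} {w : List Bool}
    (h : w = W1 ++ x :: W2) : w[W1.length]? = some x := by
  subst h
  rw [List.getElem?_append_right le_rfl]
  simp

lemma st10_level_of_decomp (a b : ℕ) {W1 W2 : List Bool} {x : Bool} {w : List Bool}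
    (h : w = W1 ++ x :: W2) :
    levelAt a b w (W1.length + 1) =
      (b : ℤ) * ((W1.count true : ℤ) + if x then 1 else 0) -
      (a : ℤ) * (((W1.length - W1.count true : ℕ) : ℤ) + if x then 0 else 1) := by
  subst h
  rw [levelAt, List.take_length_add_append 1]
  have hct : W1.count false = W1.length - W1.count true := by
    have := st10_count_tf W1; omega
  have h1 : List.take 1 (x :: W2) = [x] := by simp
  rw [h1, List.count_append, List.count_append, hct]
  cases x <;> simp <;> push_cast <;> ring

lemma st10_gcnt_mono (a : ℕ) (μ : ℕ → ℕ) {c c' : ℕ} (h : c ≤ c') :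
    gcnt a μ c ≤ gcnt a μ c' := by
  apply Finset.card_le_card
  intro k hk
  simp only [Finset.mem_filter] at *
  exact ⟨hk.1, le_trans hk.2 h⟩

lemma st10_ePos_strictMono (a : ℕ) (μ : ℕ → ℕ) : StrictMono (ePos a μ) := by
  intro c c' h
  have := st10_gcnt_mono a μ (le_of_lt h)
  simp only [ePos]
  omega

lemma st10_nPos_strictMono (a : ℕ) (μ : ℕ → ℕ) (hmono : ∀ i j : ℕ, i ≤ j → μ j ≤ μ i) :
    StrictMono (nPos a μ) := by
  apply strictMono_nat_of_lt_succ
  intro y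
  have := hmono (a - 1 - (y+1)) (a - 1 - y) (by omega)
  simp only [nPos]
  omega

lemma st10_exists_of_getElem (a b : ℕ) (μ : ℕ → ℕ) (ha : 0 < a)
    (hmono : ∀ i j : ℕ, i ≤ j → μ j ≤ μ i)
    (hzero : ∀ i, a ≤ i → μ i = 0) (hb' : μ 0 ≤ b) {p : ℕ} {x : Bool}
    (hp : (frontierWord a b μ)[p]? = some x) :
    (x = false → ∃ c < b, p = ePos a μ c) ∧ (x = true → ∃ y < a, p = nPos a μ y) := by
  obtain ⟨hT, hF, hL⟩ := st10_word_counts a b μ hmono hzero hb'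
  have hplen : p < a + b := by
    obtain ⟨h, -⟩ := List.getElem?_eq_some_iff.mp hp
    omega
  constructor
  · rintro rfl
    have hcard : ((Finset.range (frontierWord a b μ).length).filter
        fun q => (frontierWord a b μ)[q]? = some false).card = b := by
      rw [st10_card_filter_getElem, hF]
    have hsurj := Finset.surj_on_of_inj_on_of_card_le
      (s := Finset.range b)
      (t := (Finset.range (frontierWord a b μ).length).filter
        fun q => (frontierWord a b μ)[q]? = some false)
      (fun c _ => ePos a μ c) ?_ ?_ ?_
    · obtain ⟨c, hc, hpc⟩ := hsurj p (by
        simp only [Finset.mem_filter, Finset.mem_range]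
        exact ⟨by omega, hp⟩)
      exact ⟨c, Finset.mem_range.mp hc, hpc⟩
    · intro c hc
      obtain ⟨W1, W2, hw, hlen, _⟩ := st10_decomp_E a b μ ha hmono hzero hb'
        (Finset.mem_range.mp hc)
      simp only [Finset.mem_filter, Finset.mem_range]
      constructor
      · rw [hw, ← hlen]; simp
      · rw [← hlen]; exact st10_getElem_of_decomp hw
    · intro c1 c2 h1 h2 heq
      exact (st10_ePos_strictMono a μ).injective heq
    · rw [hcard, Finset.card_range]
  · rintro rfl
    have hcard : ((Finset.range (frontierWord a b μ).length).filter
        fun q => (frontierWord a b μ)[q]? = some true).card = a := by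
      rw [st10_card_filter_getElem, hT]
    have hsurj := Finset.surj_on_of_inj_on_of_card_le
      (s := Finset.range a)
      (t := (Finset.range (frontierWord a b μ).length).filter
        fun q => (frontierWord a b μ)[q]? = some true)
      (fun y _ => nPos a μ y) ?_ ?_ ?_
    · obtain ⟨y, hy, hpy⟩ := hsurj p (by
        simp only [Finset.mem_filter, Finset.mem_range]
        exact ⟨by omega, hp⟩)
      exact ⟨y, Finset.mem_range.mp hy, hpy⟩
    · intro y hy
      obtain ⟨W1, W2, hw, hlen, _⟩ := st10_decomp_N a b μ hmono hzero
        (Finset.mem_range.mp hy)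
      simp only [Finset.mem_filter, Finset.mem_range]
      constructor
      · rw [hw, ← hlen]; simp
      · rw [← hlen]; exact st10_getElem_of_decomp hw
    · intro y1 y2 h1 h2 heq
      exact (st10_nPos_strictMono a μ hmono).injective heq
    · rw [hcard, Finset.card_range]
lemma st10_leg_eq (a : ℕ) (μ : ℕ → ℕ) (hzero : ∀ i, a ≤ i → μ i = 0) (r c : ℕ) :
    leg μ r c = ((Finset.Ioo r a).filter fun r' => c < μ r').card := by
  have hset : {i' : ℕ | r < i' ∧ c < μ i'} =
      (((Finset.Ioo r a).filter fun r' => c < μ r' : Finset ℕ) : Set ℕ) := by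
    ext i'
    simp only [Set.mem_setOf_eq, Finset.coe_filter, Finset.mem_Ioo, Set.mem_setOf_eq]
    constructor
    · rintro ⟨h1, h2⟩
      have : i' < a := by
        by_contra hh
        push_neg at hh
        rw [hzero i' hh] at h2
        omega
      exact ⟨⟨h1, this⟩, h2⟩
    · tauto
  rw [leg, hset, Set.ncard_coe_finset]

lemma st10_gcnt_key (a : ℕ) (μ : ℕ → ℕ) (ha : 0 < a)
    (hmono : ∀ i j : ℕ, i ≤ j → μ j ≤ μ i) (hzero : ∀ i, a ≤ i → μ i = 0)
    {r c : ℕ} (hra : r < a) (hcell : c < μ r) :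
    gcnt a μ c + (r + 1) + leg μ r c = a := by
  have h1 : gcnt a μ c = ((Finset.range a).filter fun r' => μ r' ≤ c).card := by
    rw [gcnt]
    apply Finset.card_bij (fun k _ => a - 1 - k)
    · intro k hk
      simp only [Finset.mem_filter, Finset.mem_range] at *
      exact ⟨by omega, hk.2⟩
    · intro k1 hk1 k2 hk2 he
      simp only [Finset.mem_filter, Finset.mem_range] at hk1 hk2
      omega
    · intro r' hr'
      simp only [Finset.mem_filter, Finset.mem_range] at hr' ⊢
      refine ⟨a - 1 - r', ⟨by omega, ?_⟩, by omega⟩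
      rw [show a - 1 - (a - 1 - r') = r' from by omega]
      exact hr'.2
  have h2 : ((Finset.range a).filter fun r' => μ r' ≤ c).card +
      ((Finset.range a).filter fun r' => c < μ r').card = a := by
    have := Finset.card_filter_add_card_filter_not (s := Finset.range a)
      (p := fun r' => μ r' ≤ c)
    simp only [not_le, Finset.card_range] at this
    exact this
  have h3 : ((Finset.range a).filter fun r' => c < μ r').card =
      (r + 1) + ((Finset.Ioo r a).filter fun r' => c < μ r').card := by
    have hu : Finset.range a = Finset.range (r+1) ∪ Finset.Ico (r+1) a := by
      rw [Finset.range_eq_Ico, Finset.range_eq_Ico, Finset.Ico_union_Ico_eq_Ico (by omega) (by omega)]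
    rw [hu, Finset.filter_union, Finset.card_union_of_disjoint
      (Finset.disjoint_filter_filter (by
        rw [Finset.range_eq_Ico]
        exact Finset.Ico_disjoint_Ico_consecutive 0 (r+1) a)), ← Finset.Ico_add_one_left_eq_Ioo]
    congr 1
    rw [Finset.filter_true_of_mem]
    · simp
    · intro x hx
      simp only [Finset.mem_range] at hx
      exact lt_of_lt_of_le hcell (hmono x r (by omega))
  rw [st10_leg_eq a μ hzero]
  omega

lemma st10_level_diff (a b : ℕ) (μ : ℕ → ℕ) (ha : 0 < a)
    (hmono : ∀ i j : ℕ, i ≤ j → μ j ≤ μ i) (hzero : ∀ i, a ≤ i → μ i = 0)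
    (hb' : μ 0 ≤ b) {r c : ℕ} (hra : r < a) (hcell : c < μ r) :
    levelAt a b (frontierWord a b μ) (nPos a μ (a - 1 - r) + 1) -
      levelAt a b (frontierWord a b μ) (ePos a μ c + 1) =
    (b : ℤ) - ((a : ℤ) * armZ μ r c - (b : ℤ) * leg μ r c) := by
  have hcb : c < b := lt_of_lt_of_le hcell (le_trans (hmono 0 r (Nat.zero_le r)) hb')
  obtain ⟨W1N, W2N, hwN, hlenN, hctN⟩ :=
    st10_decomp_N a b μ hmono hzero (y := a - 1 - r) (by omega)
  obtain ⟨W1E, W2E, hwE, hlenE, hctE⟩ := st10_decomp_E a b μ ha hmono hzero hb' hcb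
  have hN := st10_level_of_decomp a b hwN
  have hE := st10_level_of_decomp a b hwE
  rw [hlenN, hctN] at hN
  rw [hlenE, hctE] at hE
  have hy : a - 1 - (a - 1 - r) = r := by omega
  have hNc : nPos a μ (a - 1 - r) - (a - 1 - r) = μ r := by
    simp [nPos, hy]
  have hEc : ePos a μ c - gcnt a μ c = c := by simp [ePos]
  rw [hNc] at hN
  rw [hEc] at hE
  rw [hN, hE, armZ]
  have key := st10_gcnt_key a μ ha hmono hzero hra hcell
  have keyz : ((a - 1 - r : ℕ) : ℤ) = (gcnt a μ c : ℤ) + (leg μ r c : ℤ) := by omega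
  simp only [if_true, if_false]
  push_cast
  linear_combination (b : ℤ) * keyz
lemma st10_gcnt_lower (a : ℕ) (μ : ℕ → ℕ) (hmono : ∀ i j : ℕ, i ≤ j → μ j ≤ μ i)
    {y c : ℕ} (hy : y < a) (h : μ (a - 1 - y) ≤ c) : y + 1 ≤ gcnt a μ c := by
  have : Finset.range (y + 1) ⊆ (Finset.range a).filter fun k => μ (a - 1 - k) ≤ c := by
    intro k hk
    simp only [Finset.mem_range] at hk
    simp only [Finset.mem_filter, Finset.mem_range]
    exact ⟨by omega, le_trans (hmono (a - 1 - y) (a - 1 - k) (by omega)) h⟩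
  simpa [gcnt] using Finset.card_le_card this

/-- for `μ ∈ R(a,b)` with frontier `w_1 ⋯ w_{a+b}` and levels
`l_0, …, l_{a+b}`, the statistic `h⁻_{b,a}(μ)` equals the number of pairs
`(i, j)` with `1 ≤ i < j ≤ a+b`, `w_i = E`, `w_j = N` and `1 ≤ l_j − l_i ≤ a+b`. -/
theorem stmt10 (a b : ℕ) (ha : 0 < a) (hb : 0 < b)
    (μ : ℕ → ℕ) (hμ : InBox a b μ) :
    hminus a b μ =
      {p : ℕ × ℕ | 1 ≤ p.1 ∧ p.1 < p.2 ∧ p.2 ≤ a + b ∧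
        (frontierWord a b μ)[p.1 - 1]? = some false ∧
        (frontierWord a b μ)[p.2 - 1]? = some true ∧
        1 ≤ levelAt a b (frontierWord a b μ) p.2 -
              levelAt a b (frontierWord a b μ) p.1 ∧
        levelAt a b (frontierWord a b μ) p.2 -
              levelAt a b (frontierWord a b μ) p.1 ≤ (a : ℤ) + b}.ncard := by
  obtain ⟨hmono, hb', hzero⟩ := hμ
  set f : ℕ × ℕ → ℕ × ℕ :=
    fun rc => (ePos a μ rc.2 + 1, nPos a μ (a - 1 - rc.1) + 1) with hf
  have hbij : Set.BijOn f
      {c : ℕ × ℕ | c.2 < μ c.1 ∧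
        -(a : ℤ) ≤ (a : ℤ) * armZ μ c.1 c.2 - (b : ℤ) * leg μ c.1 c.2 ∧
        (a : ℤ) * armZ μ c.1 c.2 - (b : ℤ) * leg μ c.1 c.2 < (b : ℤ)}
      {p : ℕ × ℕ | 1 ≤ p.1 ∧ p.1 < p.2 ∧ p.2 ≤ a + b ∧
        (frontierWord a b μ)[p.1 - 1]? = some false ∧
        (frontierWord a b μ)[p.2 - 1]? = some true ∧
        1 ≤ levelAt a b (frontierWord a b μ) p.2 -
              levelAt a b (frontierWord a b μ) p.1 ∧
        levelAt a b (frontierWord a b μ) p.2 -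
              levelAt a b (frontierWord a b μ) p.1 ≤ (a : ℤ) + b} := by
    refine ⟨?_, ?_, ?_⟩
    · -- MapsTo
      rintro ⟨r, c⟩ ⟨hcell, hX1, hX2⟩
      dsimp only at hcell hX1 hX2
      have hra : r < a := by
        by_contra hh
        push_neg at hh
        rw [hzero r hh] at hcell
        omega
      have hcb : c < b := lt_of_lt_of_le hcell (le_trans (hmono 0 r (Nat.zero_le r)) hb')
      have hy : a - 1 - (a - 1 - r) = r := by omega
      have key := st10_gcnt_key a μ ha hmono hzero hra hcell
      obtain ⟨W1E, W2E, hwE, hlenE, _⟩ := st10_decomp_E a b μ ha hmono hzero hb' hcb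
      obtain ⟨W1N, W2N, hwN, hlenN, _⟩ :=
        st10_decomp_N a b μ hmono hzero (y := a - 1 - r) (by omega)
      have hdiff := st10_level_diff a b μ ha hmono hzero hb' hra hcell
      have hmr : μ r ≤ b := le_trans (hmono 0 r (Nat.zero_le r)) hb'
      simp only [hf, Set.mem_setOf_eq, Nat.add_sub_cancel]
      refine ⟨by omega, ?_, ?_, ?_, ?_, ?_, ?_⟩
      · simp only [ePos, nPos, hy]
        omega
      · simp only [nPos, hy]
        omega
      · rw [← hlenE]
        exact st10_getElem_of_decomp hwE
      · rw [← hlenN]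
        exact st10_getElem_of_decomp hwN
      · rw [hdiff]
        linarith
      · rw [hdiff]
        linarith
    · -- InjOn
      rintro ⟨r1, c1⟩ h1 ⟨r2, c2⟩ h2 heq
      simp only [Set.mem_setOf_eq] at h1 h2
      have hra1 : r1 < a := by
        by_contra hh; push_neg at hh; rw [hzero r1 hh] at h1; omega
      have hra2 : r2 < a := by
        by_contra hh; push_neg at hh; rw [hzero r2 hh] at h2; omega
      simp only [hf, Prod.mk.injEq] at heq
      have hc : c1 = c2 := (st10_ePos_strictMono a μ).injective (by omega)
      have hr : a - 1 - r1 = a - 1 - r2 :=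
        (st10_nPos_strictMono a μ hmono).injective (by omega)
      simp only [Prod.mk.injEq]
      exact ⟨by omega, hc⟩
    · -- SurjOn
      rintro ⟨p1, p2⟩ ⟨hp1, hlt, hle, hgE, hgN, hl1, hl2⟩
      obtain ⟨c, hcb, hc⟩ :=
        (st10_exists_of_getElem a b μ ha hmono hzero hb' hgE).1 rfl
      obtain ⟨y, hya, hyn⟩ :=
        (st10_exists_of_getElem a b μ ha hmono hzero hb' hgN).2 rfl
      have hp1' : p1 = ePos a μ c + 1 := by omega
      have hp2' : p2 = nPos a μ y + 1 := by omega
      have hyr : a - 1 - (a - 1 - y) = y := by omega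
      have hcell : c < μ (a - 1 - y) := by
        by_contra hge
        push_neg at hge
        have hlow := st10_gcnt_lower a μ hmono hya hge
        have : ePos a μ c + 1 < nPos a μ y + 1 := by omega
        simp only [ePos, nPos] at this
        omega
      have hdiff := st10_level_diff a b μ ha hmono hzero hb'
        (r := a - 1 - y) (by omega) hcell
      rw [hyr] at hdiff
      rw [hp1', hp2'] at hl1 hl2
      refine ⟨(a - 1 - y, c), ⟨hcell, by linarith [hdiff], by linarith [hdiff]⟩, ?_⟩
      simp only [hf, hyr, Prod.mk.injEq]
      exact ⟨hp1'.symm, hp2'.symm⟩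
  rw [hminus, ← hbij.image_eq, Set.ncard_image_of_injOn hbij.injOn]
end

section
/- Let a and b be positive integers and let μ ∈ R(a,b) have frontier w_1 w_2…w_{a+b} with levels l_0, l_1, …, l_{a+b}. If w_1 = E, then h⁺_{b,a}(C(μ)) − h⁺_{b,a}(μ) = −#{j ∈ {1,…,a+b} : w_j = N and 1 ≤ −l_{j−1} ≤ a+b} = −#{k ∈ {1,…,a+b} : 1 ≤ −l_{k−1} ≤ a}. -/
namespace Stmt12Aux
open List

lemma bool_len (l : List Bool) : l.length = l.count true + l.count false := by
  induction l with
  | nil => simp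
  | cons c t ih =>
    rw [List.length_cons, List.count_cons, List.count_cons, ih]
    cases c <;> simp <;> omega

lemma updown (n : ℕ) (f : ℕ → ℤ) (c : ℤ) (h0 : c ≤ f 0) (hn : c ≤ f n) :
    ((Finset.range n).filter fun p => f p < c ∧ c ≤ f (p + 1)).card =
      ((Finset.range n).filter fun p => c ≤ f p ∧ f (p + 1) < c).card := by
  have key : ∀ p : ℕ,
      ((if f p < c ∧ c ≤ f (p + 1) then (1 : ℤ) else 0) -
        if c ≤ f p ∧ f (p + 1) < c then (1 : ℤ) else 0) =
      (if c ≤ f p then (0 : ℤ) else 1) - (if c ≤ f (p + 1) then (0 : ℤ) else 1) := by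
    intro p
    simp only [← not_le]
    by_cases h1 : c ≤ f p <;> by_cases h2 : c ≤ f (p + 1) <;> simp [h1, h2]
  have tele := Finset.sum_range_sub' (fun i => if c ≤ f i then (0 : ℤ) else 1) n
  have hsum : ∑ p ∈ Finset.range n, ((if f p < c ∧ c ≤ f (p + 1) then (1 : ℤ) else 0) -
      if c ≤ f p ∧ f (p + 1) < c then (1 : ℤ) else 0) = 0 := by
    rw [Finset.sum_congr rfl (fun p _ => key p), tele, if_pos h0, if_pos hn]
    ring
  rw [Finset.sum_sub_distrib, Finset.sum_boole, Finset.sum_boole, sub_eq_zero] at hsum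
  exact_mod_cast hsum

def fwl (l : List ℕ) : List Bool := l.flatMap fun x => List.replicate x false ++ [true]

lemma fwl_cons (x : ℕ) (xs : List ℕ) :
    fwl (x :: xs) = List.replicate x false ++ true :: fwl xs := by
  simp [fwl]

lemma rep_true_inj : ∀ {x y : ℕ} {u v : List Bool},
    List.replicate x false ++ true :: u = List.replicate y false ++ true :: v → x = y ∧ u = v := by
  intro x
  induction x with
  | zero =>
    intro y u v h
    cases y with
    | zero => simpa using h
    | succ y => rw [List.replicate_succ] at h; simp at h
  | succ x ih =>
    intro y u v h
    cases y with
    | zero => rw [List.replicate_succ] at h; simp at h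
    | succ y =>
      rw [List.replicate_succ, List.replicate_succ] at h
      simp only [List.cons_append, List.cons.injEq, true_and] at h
      obtain ⟨x_eq, hh⟩ := ih h
      exact ⟨by omega, hh⟩

lemma fwl_inj : ∀ {l1 l2 : List ℕ}, fwl l1 = fwl l2 → l1 = l2
  | [], [], _ => rfl
  | [], x :: xs, h => by rw [fwl_cons] at h; simp [fwl] at h
  | x :: xs, [], h => by rw [fwl_cons] at h; simp [fwl] at h
  | x :: xs, y :: ys, h => by
    rw [fwl_cons, fwl_cons] at h
    obtain ⟨h1, h2⟩ := rep_true_inj h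
    rw [h1, fwl_inj h2]
lemma frontierWord_eq_fwl (a b : ℕ) (μ : ℕ → ℕ) :
    frontierWord a b μ ++ [true] =
      fwl (((List.range a).map fun y => μ (a - 1 - y) - μ (a - y)) ++ [b - μ 0]) := by
  rw [frontierWord, fwl, List.flatMap_append, List.flatMap_map]
  simp [List.append_assoc]

lemma frontier_inj {a b : ℕ} {μ ν : ℕ → ℕ} (hμ : InBox a b μ) (hν : InBox a b ν)
    (h : frontierWord a b μ = frontierWord a b ν) : μ = ν := by
  have h2 : fwl (((List.range a).map fun y => μ (a - 1 - y) - μ (a - y)) ++ [b - μ 0]) =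
      fwl (((List.range a).map fun y => ν (a - 1 - y) - ν (a - y)) ++ [b - ν 0]) := by
    rw [← frontierWord_eq_fwl, ← frontierWord_eq_fwl, h]
  have h3 := fwl_inj h2
  have hlen : ((List.range a).map fun y => μ (a - 1 - y) - μ (a - y)).length =
      ((List.range a).map fun y => ν (a - 1 - y) - ν (a - y)).length := by simp
  obtain ⟨hmap, -⟩ := List.append_inj h3 hlen
  have h4 : ∀ y, y < a → μ (a - 1 - y) - μ (a - y) = ν (a - 1 - y) - ν (a - y) := by
    intro y hy
    have := congrArg (fun l => l[y]?) hmap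
    simpa [List.getElem?_map, List.getElem?_range, hy] using this
  have key : ∀ y, y ≤ a → μ (a - y) = ν (a - y) := by
    intro y
    induction y with
    | zero => intro _; simp [hμ.2.2 a le_rfl, hν.2.2 a le_rfl]
    | succ y ih =>
      intro hy
      have h1 := h4 y (by omega)
      have hm : μ (a - y) ≤ μ (a - 1 - y) := hμ.1 _ _ (by omega)
      have hn : ν (a - y) ≤ ν (a - 1 - y) := hν.1 _ _ (by omega)
      have h5 := ih (by omega)
      rw [show a - (y + 1) = a - 1 - y from by omega]
      omega
  funext i
  by_cases hi : i < a
  · have := key (a - i) (by omega)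
    rwa [show a - (a - i) = i from by omega] at this
  · rw [hμ.2.2 i (by omega), hν.2.2 i (by omega)]
def blk (a : ℕ) (μ : ℕ → ℕ) (y : ℕ) : List Bool :=
  (List.range y).flatMap fun y' => List.replicate (μ (a - 1 - y') - μ (a - y')) false ++ [true]

lemma blk_succ (a : ℕ) (μ : ℕ → ℕ) (y : ℕ) :
    blk a μ (y + 1) = blk a μ y ++ (List.replicate (μ (a - 1 - y) - μ (a - y)) false ++ [true]) := by
  rw [blk, List.range_succ, List.flatMap_append]
  simp [blk]

lemma blk_prefix {a : ℕ} {μ : ℕ → ℕ} :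
    ∀ y z, y + 1 ≤ z → ∃ rest, blk a μ z =
      (blk a μ y ++ List.replicate (μ (a - 1 - y) - μ (a - y)) false) ++ true :: rest := by
  intro y z
  induction z with
  | zero => omega
  | succ z ih =>
    intro hz
    rcases Nat.lt_or_ge (y + 1) (z + 1) with h | h
    · obtain ⟨rest, hrest⟩ := ih (by omega)
      refine ⟨rest ++ (List.replicate (μ (a - 1 - z) - μ (a - z)) false ++ [true]), ?_⟩
      rw [blk_succ, hrest]; simp [List.append_assoc]
    · have hyz : y = z := by omega
      subst hyz
      exact ⟨[], by rw [blk_succ]; simp [List.append_assoc]⟩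

section WithBox
variable {a b : ℕ} {μ : ℕ → ℕ}

lemma frontierWord_eq_blk : frontierWord a b μ = blk a μ a ++ List.replicate (b - μ 0) false := rfl

variable (hmono : ∀ i j : ℕ, i ≤ j → μ j ≤ μ i) (hza : μ a = 0)
include hmono hza

lemma blk_len : ∀ y, y ≤ a → (blk a μ y).length = μ (a - y) + y := by
  intro y
  induction y with
  | zero => intro _; simp [blk, hza]
  | succ y ih =>
    intro hy
    have h1 := ih (by omega)
    have h2 : μ (a - y) ≤ μ (a - 1 - y) := hmono _ _ (by omega)
    rw [blk_succ, List.length_append, h1, List.length_append, List.length_replicate,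
      show a - (y + 1) = a - 1 - y from by omega]
    simp
    omega

lemma blk_true : ∀ y, y ≤ a → (blk a μ y).count true = y := by
  intro y
  induction y with
  | zero => intro _; simp [blk]
  | succ y ih =>
    intro hy
    rw [blk_succ, List.count_append, ih (by omega), List.count_append, List.count_replicate]
    simp

lemma blk_false : ∀ y, y ≤ a → (blk a μ y).count false = μ (a - y) := by
  intro y
  induction y with
  | zero => intro _; simp [blk, hza]
  | succ y ih =>
    intro hy
    have h2 : μ (a - y) ≤ μ (a - 1 - y) := hmono _ _ (by omega)
    rw [blk_succ, List.count_append, ih (by omega), List.count_append, List.count_replicate,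
      show a - (y + 1) = a - 1 - y from by omega]
    simp
    omega

lemma W_split {y : ℕ} (hy : y < a) : ∃ rest, frontierWord a b μ =
    (blk a μ y ++ List.replicate (μ (a - 1 - y) - μ (a - y)) false) ++ true :: rest := by
  obtain ⟨rest, hrest⟩ := blk_prefix y a hy
  refine ⟨rest ++ List.replicate (b - μ 0) false, ?_⟩
  rw [frontierWord_eq_blk, hrest]
  simp [List.append_assoc]

lemma len_aux {y : ℕ} (hy : y < a) :
    (blk a μ y ++ List.replicate (μ (a - 1 - y) - μ (a - y)) false).length = μ (a - 1 - y) + y := by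
  have h2 : μ (a - y) ≤ μ (a - 1 - y) := hmono _ _ (by omega)
  rw [List.length_append, blk_len hmono hza y (by omega), List.length_replicate]
  omega

lemma take_q {y : ℕ} (hy : y < a) :
    (frontierWord a b μ).take (μ (a - 1 - y) + y) =
      blk a μ y ++ List.replicate (μ (a - 1 - y) - μ (a - y)) false := by
  obtain ⟨rest, hrest⟩ := W_split (b := b) hmono hza hy
  rw [hrest]
  exact List.take_left' (len_aux hmono hza hy)

lemma get_q {y : ℕ} (hy : y < a) :
    (frontierWord a b μ)[μ (a - 1 - y) + y]? = some true := by
  obtain ⟨rest, hrest⟩ := W_split (b := b) hmono hza hy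
  rw [hrest, List.getElem?_append_right (by rw [len_aux hmono hza hy]),
    len_aux hmono hza hy]
  simp

lemma count_q_true {y : ℕ} (hy : y < a) :
    ((frontierWord a b μ).take (μ (a - 1 - y) + y)).count true = y := by
  rw [take_q hmono hza hy, List.count_append, blk_true hmono hza y (by omega),
    List.count_replicate]
  simp

lemma count_q_false {y : ℕ} (hy : y < a) :
    ((frontierWord a b μ).take (μ (a - 1 - y) + y)).count false = μ (a - 1 - y) := by
  have h2 : μ (a - y) ≤ μ (a - 1 - y) := hmono _ _ (by omega)
  rw [take_q hmono hza hy, List.count_append, blk_false hmono hza y (by omega),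
    List.count_replicate]
  simp
  omega

lemma level_q {y : ℕ} (hy : y < a) :
    levelAt a b (frontierWord a b μ) (μ (a - 1 - y) + y) =
      (b : ℤ) * y - (a : ℤ) * μ (a - 1 - y) := by
  rw [levelAt, count_q_true hmono hza hy, count_q_false hmono hza hy]

lemma W_count_true : (frontierWord a b μ).count true = a := by
  rw [frontierWord_eq_blk, List.count_append, blk_true hmono hza a le_rfl, List.count_replicate]
  simp

lemma W_count_false (hμb : μ 0 ≤ b) : (frontierWord a b μ).count false = b := by
  rw [frontierWord_eq_blk, List.count_append, blk_false hmono hza a le_rfl, List.count_replicate]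
  simp
  omega

lemma W_len (hμb : μ 0 ≤ b) : (frontierWord a b μ).length = a + b := by
  rw [bool_len, W_count_true hmono hza, W_count_false hmono hza hμb]

end WithBox

lemma count_take_lt {l : List Bool} {p q : ℕ} (hpq : p < q) (h : l[p]? = some true) :
    (l.take p).count true < (l.take q).count true := by
  have h1 : l.take (p + 1) = l.take p ++ [true] := by
    rw [List.take_succ, h]; rfl
  have h2 : l.take q = l.take (p + 1) ++ (l.drop (p + 1)).take (q - (p + 1)) := by
    rw [← List.take_add]; congr 1; omega
  rw [h2, h1, List.count_append, List.count_append]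
  simp
  omega

lemma levelAt_succ {a b : ℕ} {w : List Bool} {p : ℕ} {c : Bool} (h : w[p]? = some c) :
    levelAt a b w (p + 1) = levelAt a b w p + (if c then (b : ℤ) else -(a : ℤ)) := by
  rw [levelAt, levelAt, List.take_succ, h]
  cases c <;> simp [List.count_append] <;> push_cast <;> ring

section WithBox2
variable {a b : ℕ} {μ : ℕ → ℕ}
variable (hmono : ∀ i j : ℕ, i ≤ j → μ j ≤ μ i) (hza : μ a = 0)
include hmono hza

lemma true_pos {p : ℕ} (h : (frontierWord a b μ)[p]? = some true) :
    ∃ y, y < a ∧ p = μ (a - 1 - y) + y := by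
  have hya : (((frontierWord a b μ)).take p).count true < a := by
    have h1 : (frontierWord a b μ).take (p + 1) = (frontierWord a b μ).take p ++ [true] := by
      rw [List.take_succ, h]; rfl
    have h2 : (frontierWord a b μ).count true =
        ((frontierWord a b μ).take (p + 1)).count true +
        ((frontierWord a b μ).drop (p + 1)).count true := by
      conv_lhs => rw [← List.take_append_drop (p + 1) (frontierWord a b μ)]
      rw [List.count_append]
    rw [W_count_true hmono hza, h1, List.count_append] at h2
    simp at h2
    omega
  set y := (((frontierWord a b μ)).take p).count true with hy
  refine ⟨y, hya, ?_⟩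
  have hq := get_q (b := b) hmono hza hya
  have hcq := count_q_true (b := b) hmono hza hya
  rcases lt_trichotomy p (μ (a - 1 - y) + y) with hlt | heq | hgt
  · have := count_take_lt hlt h
    omega
  · exact heq
  · have := count_take_lt hgt hq
    omega

end WithBox2
set_option linter.unusedSectionVars false

def hset (a b : ℕ) (μ : ℕ → ℕ) : Set (ℕ × ℕ) :=
  {c : ℕ × ℕ | c.2 < μ c.1 ∧
    -(a : ℤ) < (a : ℤ) * armZ μ c.1 c.2 - (b : ℤ) * leg μ c.1 c.2 ∧
    (a : ℤ) * armZ μ c.1 c.2 - (b : ℤ) * leg μ c.1 c.2 ≤ (b : ℤ)}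

lemma hplus_eq (a b : ℕ) (μ : ℕ → ℕ) : hplus a b μ = (hset a b μ).ncard := rfl

def TS (a b : ℕ) (μ : ℕ → ℕ) : Set ℕ :=
  {i : ℕ | i < a ∧
    -(a : ℤ) < (a : ℤ) * ((μ i : ℤ) - 1) - (b : ℤ) * ((a : ℤ) - 1 - (i : ℤ)) ∧
    (a : ℤ) * ((μ i : ℤ) - 1) - (b : ℤ) * ((a : ℤ) - 1 - (i : ℤ)) ≤ (b : ℤ)}

lemma leg_shift (μ : ℕ → ℕ) (i j : ℕ) : leg (fun i => μ i - 1) i j = leg μ i (j + 1) := by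
  unfold leg
  congr 1
  ext i'
  simp only [Set.mem_setOf_eq]
  constructor <;> rintro ⟨h1, h2⟩ <;> exact ⟨h1, by omega⟩

section HplusSec
variable {a b : ℕ} {μ : ℕ → ℕ}
variable (hmono : ∀ i j : ℕ, i ≤ j → μ j ≤ μ i) (hzero : ∀ i, a ≤ i → μ i = 0)
include hmono hzero

lemma leg_zero (hpos : 1 ≤ μ (a - 1)) {i : ℕ} (hi : i < a) :
    (leg μ i 0 : ℤ) = (a : ℤ) - 1 - (i : ℤ) := by
  have hset : {i' : ℕ | i < i' ∧ 0 < μ i'} = Set.Ioo i a := by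
    ext i'
    simp only [Set.mem_setOf_eq, Set.mem_Ioo]
    constructor
    · rintro ⟨h1, h2⟩
      refine ⟨h1, ?_⟩
      by_contra hge
      push_neg at hge
      rw [hzero i' hge] at h2
      omega
    · rintro ⟨h1, h2⟩
      refine ⟨h1, ?_⟩
      have := hmono i' (a - 1) (by omega)
      omega
  rw [leg, hset, ← Finset.coe_Ioo, Set.ncard_coe_finset, Nat.card_Ioo]
  omega

lemma hset_finite (hμb : μ 0 ≤ b) : (hset a b μ).Finite := by
  apply Set.Finite.subset ((Set.finite_Iio a).prod (Set.finite_Iio b))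
  rintro ⟨i, j⟩ h
  obtain ⟨h1, -, -⟩ := h
  simp only [Set.mem_prod, Set.mem_Iio]
  constructor
  · by_contra hge
    push_neg at hge
    rw [hzero i hge] at h1
    omega
  · have := hmono 0 i (by omega)
    simp only at h1
    omega

lemma TS_finite : (TS a b μ).Finite :=
  Set.Finite.subset (Set.finite_Iio a) (fun i hi => hi.1)

lemma cell_corr (i j : ℕ) :
    (i, j) ∈ hset a b (fun i => μ i - 1) ↔ (i, j + 1) ∈ hset a b μ := by
  have hleg : leg (fun i => μ i - 1) i j = leg μ i (j + 1) := leg_shift μ i j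
  constructor
  · rintro ⟨h1, h2, h3⟩
    replace h1 : j < μ i - 1 := h1
    replace h2 : -(a : ℤ) < (a : ℤ) * armZ (fun i => μ i - 1) i j -
      (b : ℤ) * leg (fun i => μ i - 1) i j := h2
    replace h3 : (a : ℤ) * armZ (fun i => μ i - 1) i j -
      (b : ℤ) * leg (fun i => μ i - 1) i j ≤ (b : ℤ) := h3
    have hμi : 1 ≤ μ i := by omega
    have harm : armZ (fun i => μ i - 1) i j = armZ μ i (j + 1) := by
      unfold armZ
      simp only
      rw [Nat.cast_sub hμi]
      push_cast
      ring
    rw [harm, hleg] at h2 h3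
    exact ⟨show j + 1 < μ i by omega, h2, h3⟩
  · rintro ⟨h1, h2, h3⟩
    replace h1 : j + 1 < μ i := h1
    replace h2 : -(a : ℤ) < (a : ℤ) * armZ μ i (j + 1) - (b : ℤ) * leg μ i (j + 1) := h2
    replace h3 : (a : ℤ) * armZ μ i (j + 1) - (b : ℤ) * leg μ i (j + 1) ≤ (b : ℤ) := h3
    have hμi : 1 ≤ μ i := by omega
    have harm : armZ (fun i => μ i - 1) i j = armZ μ i (j + 1) := by
      unfold armZ
      simp only
      rw [Nat.cast_sub hμi]
      push_cast
      ring
    refine ⟨show j < μ i - 1 by omega, ?_, ?_⟩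
    · show -(a : ℤ) < (a : ℤ) * armZ (fun i => μ i - 1) i j -
        (b : ℤ) * leg (fun i => μ i - 1) i j
      rw [harm, hleg]; exact h2
    · show (a : ℤ) * armZ (fun i => μ i - 1) i j -
        (b : ℤ) * leg (fun i => μ i - 1) i j ≤ (b : ℤ)
      rw [harm, hleg]; exact h3

lemma hset_decomp (hpos : 1 ≤ μ (a - 1)) :
    hset a b μ = ((fun c : ℕ × ℕ => (c.1, c.2 + 1)) '' hset a b (fun i => μ i - 1)) ∪
      ((fun i : ℕ => (i, 0)) '' TS a b μ) := by
  apply Set.eq_of_subset_of_subset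
  · rintro ⟨i, j⟩ ⟨h1, h2, h3⟩
    replace h1 : j < μ i := h1
    replace h2 : -(a : ℤ) < (a : ℤ) * armZ μ i j - (b : ℤ) * leg μ i j := h2
    replace h3 : (a : ℤ) * armZ μ i j - (b : ℤ) * leg μ i j ≤ (b : ℤ) := h3
    cases j with
    | zero =>
      right
      have hia : i < a := by
        by_contra hge
        push_neg at hge
        rw [hzero i hge] at h1
        omega
      have hl := leg_zero hmono hzero hpos hia
      have harm : armZ μ i 0 = (μ i : ℤ) - 1 := by unfold armZ; push_cast; ring
      rw [harm, hl] at h2 h3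
      exact ⟨i, ⟨hia, h2, h3⟩, rfl⟩
    | succ j =>
      left
      exact ⟨(i, j), (cell_corr hmono hzero i j).mpr ⟨h1, h2, h3⟩, rfl⟩
  · rintro ⟨i, j⟩ (⟨⟨i0, j0⟩, hc, hij⟩ | ⟨i', hi', hij⟩)
    · cases hij
      exact (cell_corr hmono hzero i0 j0).mp hc
    · rw [Prod.mk.injEq] at hij
      obtain ⟨rfl, rfl⟩ := hij
      obtain ⟨hi'a, hA, hB⟩ := hi'
      have hl := leg_zero hmono hzero hpos hi'a
      have harm : armZ μ i' 0 = (μ i' : ℤ) - 1 := by unfold armZ; push_cast; ring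
      have h1 : 0 < μ i' := by
        have := hmono i' (a - 1) (by omega)
        omega
      refine ⟨h1, ?_, ?_⟩
      · show -(a : ℤ) < (a : ℤ) * armZ μ i' 0 - (b : ℤ) * leg μ i' 0
        rw [harm, hl]; exact hA
      · show (a : ℤ) * armZ μ i' 0 - (b : ℤ) * leg μ i' 0 ≤ (b : ℤ)
        rw [harm, hl]; exact hB

lemma hplus_split (hμb : μ 0 ≤ b) (hpos : 1 ≤ μ (a - 1)) :
    hplus a b μ = hplus a b (fun i => μ i - 1) + (TS a b μ).ncard := by
  have hmono' : ∀ i j : ℕ, i ≤ j → (fun i => μ i - 1) j ≤ (fun i => μ i - 1) i := by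
    intro i j h
    have := hmono i j h
    simp only
    omega
  have hzero' : ∀ i, a ≤ i → (fun i => μ i - 1) i = 0 := by
    intro i h
    show μ i - 1 = 0
    rw [hzero i h]
  have hfin1 : (hset a b (fun i => μ i - 1)).Finite :=
    hset_finite hmono' hzero' (by show μ 0 - 1 ≤ b; omega)
  have hfin2 : (TS a b μ).Finite := TS_finite hmono hzero
  have hinj1 : Function.Injective (fun c : ℕ × ℕ => (c.1, c.2 + 1)) := by
    rintro ⟨x1, x2⟩ ⟨y1, y2⟩ h
    simp only [Prod.mk.injEq] at h ⊢
    omega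
  have hinj2 : Function.Injective (fun i : ℕ => (i, 0)) := by
    intro x y h
    simpa using h
  have hdisj : Disjoint ((fun c : ℕ × ℕ => (c.1, c.2 + 1)) '' hset a b (fun i => μ i - 1))
      ((fun i : ℕ => (i, 0)) '' TS a b μ) := by
    rw [Set.disjoint_left]
    rintro ⟨i, j⟩ h1 h2
    simp only [Set.mem_image, Prod.mk.injEq] at h1 h2
    obtain ⟨c, -, -, hc2⟩ := h1
    obtain ⟨i', -, -, hi2⟩ := h2
    omega
  rw [hplus_eq, hplus_eq, hset_decomp hmono hzero hpos,
    Set.ncard_union_eq hdisj (hfin1.image _) (hfin2.image _),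
    Set.ncard_image_of_injective _ hinj1, Set.ncard_image_of_injective _ hinj2]

end HplusSec
lemma flatMap_congr' {α β : Type*} {l : List α} {f g : α → List β}
    (h : ∀ x ∈ l, f x = g x) : l.flatMap f = l.flatMap g := by
  induction l with
  | nil => rfl
  | cons x xs ih =>
    rw [List.flatMap_cons, List.flatMap_cons, h x (by simp),
      ih (fun y hy => h y (by simp [hy]))]

lemma rotate_eq {a b : ℕ} {μ : ℕ → ℕ} (hbox : InBox a b μ) (ha : 0 < a)
    (hpos : 1 ≤ μ (a - 1)) :
    frontierWord a b (fun i => μ i - 1) = (frontierWord a b μ).rotate 1 := by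
  obtain ⟨hmono, hμb, hzero⟩ := hbox
  obtain ⟨a', rfl⟩ : ∃ a', a = a' + 1 := ⟨a - 1, by omega⟩
  have hza : μ (a' + 1) = 0 := hzero _ le_rfl
  have hpos' : 1 ≤ μ a' := by simpa using hpos
  have hμ0 : 1 ≤ μ 0 := le_trans hpos' (hmono 0 a' (by omega))
  -- expand both words over range (a'+1) = 0 :: map succ (range a')
  rw [frontierWord, frontierWord, List.range_succ_eq_map, List.flatMap_cons,
    List.flatMap_cons, List.flatMap_map, List.flatMap_map]
  -- the middle blocks agree
  have hmid : ((List.range a').flatMap fun y =>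
      List.replicate ((fun i => μ i - 1) (a' + 1 - 1 - Nat.succ y) -
        (fun i => μ i - 1) (a' + 1 - Nat.succ y)) false ++ [true]) =
      ((List.range a').flatMap fun y =>
      List.replicate (μ (a' + 1 - 1 - Nat.succ y) - μ (a' + 1 - Nat.succ y)) false ++ [true]) := by
    apply flatMap_congr'
    intro y hy
    rw [List.mem_range] at hy
    have h1 : μ (a' + 1 - Nat.succ y) ≤ μ (a' + 1 - 1 - Nat.succ y) := hmono _ _ (by omega)
    have h2 : 1 ≤ μ (a' + 1 - Nat.succ y) := by
      have := hmono (a' + 1 - Nat.succ y) a' (by omega)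
      omega
    have he : (fun i => μ i - 1) (a' + 1 - 1 - Nat.succ y) -
        (fun i => μ i - 1) (a' + 1 - Nat.succ y) =
        μ (a' + 1 - 1 - Nat.succ y) - μ (a' + 1 - Nat.succ y) := by
      show μ (a' + 1 - 1 - Nat.succ y) - 1 - (μ (a' + 1 - Nat.succ y) - 1) = _
      omega
    rw [he]
  rw [hmid]
  -- head blocks
  have hhead : List.replicate ((fun i => μ i - 1) (a' + 1 - 1 - 0) -
      (fun i => μ i - 1) (a' + 1 - 0)) false =
      List.replicate (μ a' - 1) false := by
    congr 1
    show μ (a' + 1 - 1 - 0) - 1 - (μ (a' + 1) - 1) = μ a' - 1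
    rw [hza]
    simp
  have hheadμ : List.replicate (μ (a' + 1 - 1 - 0) - μ (a' + 1 - 0)) false =
      false :: List.replicate (μ a' - 1) false := by
    rw [show μ (a' + 1 - 1 - 0) - μ (a' + 1 - 0) = (μ a' - 1) + 1 from by
      simp only [Nat.sub_zero, Nat.add_sub_cancel]; rw [hza]; omega,
      List.replicate_succ]
  -- trailing
  have htail : List.replicate (b - (fun i => μ i - 1) 0) false =
      List.replicate (b - μ 0) false ++ [false] := by
    rw [show b - (fun i => μ i - 1) 0 = (b - μ 0) + 1 from by show b - (μ 0 - 1) = _; omega,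
      List.replicate_succ']
  rw [hhead, hheadμ, htail]
  simp only [List.cons_append]
  rw [List.rotate_cons_succ, List.rotate_zero]
  simp [List.append_assoc]
section JSec
variable {a b : ℕ} {μ : ℕ → ℕ}

lemma TS_image (hbox : InBox a b μ) (ha : 0 < a) (hpos : 1 ≤ μ (a - 1)) :
    {j : ℕ | 1 ≤ j ∧ j ≤ a + b ∧
        (frontierWord a b μ)[j - 1]? = some true ∧
        1 ≤ -levelAt a b (frontierWord a b μ) (j - 1) ∧
        -levelAt a b (frontierWord a b μ) (j - 1) ≤ (a : ℤ) + b} =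
      (fun i => μ i + (a - i)) '' TS a b μ := by
  obtain ⟨hmono, hμb, hzero⟩ := hbox
  have hza : μ a = 0 := hzero a le_rfl
  ext j
  simp only [Set.mem_setOf_eq, Set.mem_image]
  constructor
  · rintro ⟨hj1, hj2, hjt, hl1, hl2⟩
    obtain ⟨y, hya, hp⟩ := true_pos hmono hza hjt
    refine ⟨a - 1 - y, ?_, ?_⟩
    · -- membership in TS
      have hlev := level_q (b := b) hmono hza hya
      rw [← hp] at hlev
      rw [hlev] at hl1 hl2
      have hyc : (y : ℤ) = (a : ℤ) - 1 - ((a - 1 - y : ℕ) : ℤ) := by omega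
      refine ⟨by omega, ?_, ?_⟩
      · rw [← hyc]
        nlinarith [hl1]
      · rw [← hyc]
        nlinarith [hl2]
    · omega
  · rintro ⟨i, ⟨hia, hA, hB⟩, rfl⟩
    set y := a - 1 - i with hydef
    have hya : y < a := by omega
    have hi : a - 1 - y = i := by omega
    have hq := get_q (b := b) hmono hza hya
    have hlev := level_q (b := b) hmono hza hya
    rw [hi] at hq hlev
    have hje : μ i + (a - i) - 1 = μ i + y := by omega
    have hyc : (y : ℤ) = (a : ℤ) - 1 - (i : ℤ) := by omega
    refine ⟨by omega, ?_, ?_, ?_, ?_⟩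
    · -- j ≤ a + b
      have := hmono 0 i (by omega)
      omega
    · rw [hje]; exact hq
    · rw [hje, hlev]
      nlinarith [hA, hyc]
    · rw [hje, hlev]
      nlinarith [hB, hyc]

lemma TS_J_card (hbox : InBox a b μ) (ha : 0 < a) (hpos : 1 ≤ μ (a - 1)) :
    {j : ℕ | 1 ≤ j ∧ j ≤ a + b ∧
        (frontierWord a b μ)[j - 1]? = some true ∧
        1 ≤ -levelAt a b (frontierWord a b μ) (j - 1) ∧
        -levelAt a b (frontierWord a b μ) (j - 1) ≤ (a : ℤ) + b}.ncard =
      (TS a b μ).ncard := by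
  rw [TS_image hbox ha hpos]
  apply Set.ncard_image_of_injOn
  intro x hx y hy hxy
  simp only at hxy
  rcases lt_trichotomy x y with h | h | h
  · have := hbox.1 x y (le_of_lt h)
    have hya := hy.1
    omega
  · exact h
  · have := hbox.1 y x (le_of_lt h)
    have hxa := hx.1
    omega

end JSec
lemma J_K_card {a b : ℕ} {μ : ℕ → ℕ} (hbox : InBox a b μ) (ha : 0 < a) (hb : 0 < b) :
    {j : ℕ | 1 ≤ j ∧ j ≤ a + b ∧
        (frontierWord a b μ)[j - 1]? = some true ∧
        1 ≤ -levelAt a b (frontierWord a b μ) (j - 1) ∧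
        -levelAt a b (frontierWord a b μ) (j - 1) ≤ (a : ℤ) + b}.ncard =
    {k : ℕ | 1 ≤ k ∧ k ≤ a + b ∧
        1 ≤ -levelAt a b (frontierWord a b μ) (k - 1) ∧
        -levelAt a b (frontierWord a b μ) (k - 1) ≤ (a : ℤ)}.ncard := by
  obtain ⟨hmono, hμb, hzero⟩ := hbox
  have hza : μ a = 0 := hzero a le_rfl
  have hlen : (frontierWord a b μ).length = a + b := W_len hmono hza hμb
  set f := levelAt a b (frontierWord a b μ) with hf
  have hstep : ∀ p, p < a + b → ∃ c, (frontierWord a b μ)[p]? = some c ∧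
      f (p + 1) = f p + (if c then (b : ℤ) else -(a : ℤ)) := by
    intro p hp
    have hp' : p < (frontierWord a b μ).length := by omega
    exact ⟨(frontierWord a b μ)[p], List.getElem?_eq_getElem hp',
      levelAt_succ (List.getElem?_eq_getElem hp')⟩
  have hf0 : f 0 = 0 := by simp [hf, levelAt]
  have hftop : f (a + b) = 0 := by
    rw [hf, levelAt, List.take_of_length_le (by omega), W_count_true hmono hza,
      W_count_false hmono hza hμb]
    ring
  have haZ : (1 : ℤ) ≤ (a : ℤ) := by exact_mod_cast ha
  have hbZ : (1 : ℤ) ≤ (b : ℤ) := by exact_mod_cast hb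
  -- 0-based finsets
  set J' : Finset ℕ := (Finset.range (a + b)).filter
    (fun p => (frontierWord a b μ)[p]? = some true ∧ -(a : ℤ) - b ≤ f p ∧ f p ≤ -1) with hJ'
  set K' : Finset ℕ := (Finset.range (a + b)).filter
    (fun p => -(a : ℤ) ≤ f p ∧ f p ≤ -1) with hK'
  have hJim : {j : ℕ | 1 ≤ j ∧ j ≤ a + b ∧
      (frontierWord a b μ)[j - 1]? = some true ∧
      1 ≤ -f (j - 1) ∧ -f (j - 1) ≤ (a : ℤ) + b} = (fun p => p + 1) '' (J' : Set ℕ) := by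
    ext j
    simp only [Set.mem_setOf_eq, Set.mem_image, Finset.mem_coe, hJ', Finset.mem_filter,
      Finset.mem_range]
    constructor
    · rintro ⟨h1, h2, h3, h4, h5⟩
      exact ⟨j - 1, ⟨by omega, h3, by linarith, by linarith⟩, by omega⟩
    · rintro ⟨p, ⟨hp, hpt, hp1, hp2⟩, rfl⟩
      refine ⟨by omega, by omega, by simpa using hpt, by simpa using (by linarith : 1 ≤ -f p),
        by simpa using (by linarith : -f p ≤ (a : ℤ) + b)⟩
  have hKim : {k : ℕ | 1 ≤ k ∧ k ≤ a + b ∧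
      1 ≤ -f (k - 1) ∧ -f (k - 1) ≤ (a : ℤ)} = (fun p => p + 1) '' (K' : Set ℕ) := by
    ext k
    simp only [Set.mem_setOf_eq, Set.mem_image, Finset.mem_coe, hK', Finset.mem_filter,
      Finset.mem_range]
    constructor
    · rintro ⟨h1, h2, h3, h4⟩
      exact ⟨k - 1, ⟨by omega, by linarith, by linarith⟩, by omega⟩
    · rintro ⟨p, ⟨hp, hp1, hp2⟩, rfl⟩
      refine ⟨by omega, by omega, by simpa using (by linarith : 1 ≤ -f p),
        by simpa using (by linarith : -f p ≤ (a : ℤ))⟩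
  rw [hJim, hKim, Set.ncard_image_of_injective _ (add_left_injective 1),
    Set.ncard_image_of_injective _ (add_left_injective 1),
    Set.ncard_coe_finset, Set.ncard_coe_finset]
  -- now a Finset card statement
  have e1 := Finset.card_filter_add_card_filter_not
    (s := J') (p := fun p => -(a : ℤ) ≤ f p)
  have e2 := Finset.card_filter_add_card_filter_not
    (s := K') (p := fun p => (frontierWord a b μ)[p]? = some true)
  have hJ1K1 : J'.filter (fun p => -(a : ℤ) ≤ f p) =
      K'.filter (fun p => (frontierWord a b μ)[p]? = some true) := by
    ext p
    simp only [hJ', hK', Finset.mem_filter, Finset.mem_range]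
    constructor
    · rintro ⟨⟨hp, ht, h1, h2⟩, h3⟩
      exact ⟨⟨hp, h3, h2⟩, ht⟩
    · rintro ⟨⟨hp, h3, h2⟩, ht⟩
      exact ⟨⟨hp, ht, by linarith, h2⟩, h3⟩
  have hup : J'.filter (fun p => ¬ -(a : ℤ) ≤ f p) =
      (Finset.range (a + b)).filter (fun p => f p < -(a : ℤ) ∧ -(a : ℤ) ≤ f (p + 1)) := by
    ext p
    simp only [hJ', Finset.filter_filter, Finset.mem_filter, Finset.mem_range, not_le]
    constructor
    · rintro ⟨hp, ⟨ht, h1, h2⟩, h3⟩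
      obtain ⟨c, hc, hs⟩ := hstep p hp
      rw [ht] at hc
      have hct : c = true := (Option.some.inj hc).symm
      subst hct
      rw [if_pos rfl] at hs
      exact ⟨hp, h3, by linarith⟩
    · rintro ⟨hp, h3, h4⟩
      obtain ⟨c, hc, hs⟩ := hstep p hp
      cases c with
      | false =>
        rw [if_neg (by simp)] at hs
        exfalso
        linarith
      | true =>
        rw [if_pos rfl] at hs
        exact ⟨hp, ⟨hc, by linarith, by linarith⟩, h3⟩
  have hdown : K'.filter (fun p => ¬ (frontierWord a b μ)[p]? = some true) =
      (Finset.range (a + b)).filter (fun p => -(a : ℤ) ≤ f p ∧ f (p + 1) < -(a : ℤ)) := by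
    ext p
    simp only [hK', Finset.filter_filter, Finset.mem_filter, Finset.mem_range]
    constructor
    · rintro ⟨hp, ⟨h1, h2⟩, h3⟩
      obtain ⟨c, hc, hs⟩ := hstep p hp
      cases c with
      | true => exact absurd hc h3
      | false =>
        rw [if_neg (by simp)] at hs
        exact ⟨hp, h1, by linarith⟩
    · rintro ⟨hp, h1, h2⟩
      obtain ⟨c, hc, hs⟩ := hstep p hp
      cases c with
      | true =>
        rw [if_pos rfl] at hs
        exfalso
        linarith
      | false =>
        rw [if_neg (by simp)] at hs
        refine ⟨hp, ⟨h1, by linarith⟩, ?_⟩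
        rw [hc]
        simp
  have hud := updown (a + b) f (-(a : ℤ)) (by rw [hf0]; linarith) (by rw [hftop]; linarith)
  have c1 : (J'.filter (fun p => -(a : ℤ) ≤ f p)).card =
      (K'.filter (fun p => (frontierWord a b μ)[p]? = some true)).card := by rw [hJ1K1]
  have c2 : (J'.filter (fun p => ¬ -(a : ℤ) ≤ f p)).card =
      (K'.filter (fun p => ¬ (frontierWord a b μ)[p]? = some true)).card := by
    rw [hup, hdown]
    exact hud
  omega

lemma inbox_sub {a b : ℕ} {μ : ℕ → ℕ} (hbox : InBox a b μ) : InBox a b (fun i => μ i - 1) :=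
  ⟨fun i j h => by have := hbox.1 i j h; simp only; omega,
   by have := hbox.2.1; show μ 0 - 1 ≤ b; omega,
   fun i h => by have := hbox.2.2 i h; show μ i - 1 = 0; omega⟩

end Stmt12Aux

open Stmt12Aux

/-- let `μ ∈ R(a,b)` have frontier `w = w_1 ⋯ w_{a+b}` with levels
`l_0, …, l_{a+b}`, and let `ν = C(μ)` be the (unique) partition in `R(a,b)` whose
frontier is the cyclic shift `w_2 ⋯ w_{a+b} w_1`.  If `w_1 = E`, then
`h⁺_{b,a}(C(μ)) − h⁺_{b,a}(μ)` equals minus the number of `j ∈ {1,…,a+b}` with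
`w_j = N` and `1 ≤ −l_{j−1} ≤ a+b`, which also equals minus the number of
`k ∈ {1,…,a+b}` with `1 ≤ −l_{k−1} ≤ a`. -/
theorem stmt12 (a b : ℕ) (ha : 0 < a) (hb : 0 < b)
    (μ ν : ℕ → ℕ) (hμ : InBox a b μ) (hν : InBox a b ν)
    (hC : frontierWord a b ν = (frontierWord a b μ).rotate 1)
    (hw1 : (frontierWord a b μ)[0]? = some false) :
    ((hplus a b ν : ℤ) - (hplus a b μ : ℤ) =
      -({j : ℕ | 1 ≤ j ∧ j ≤ a + b ∧
        (frontierWord a b μ)[j - 1]? = some true ∧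
        1 ≤ -levelAt a b (frontierWord a b μ) (j - 1) ∧
        -levelAt a b (frontierWord a b μ) (j - 1) ≤ (a : ℤ) + b}.ncard : ℤ)) ∧
    ((hplus a b ν : ℤ) - (hplus a b μ : ℤ) =
      -({k : ℕ | 1 ≤ k ∧ k ≤ a + b ∧
        1 ≤ -levelAt a b (frontierWord a b μ) (k - 1) ∧
        -levelAt a b (frontierWord a b μ) (k - 1) ≤ (a : ℤ)}.ncard : ℤ)) := by
  have hza : μ a = 0 := hμ.2.2 a le_rfl
  obtain ⟨rest, hsplit⟩ := W_split (b := b) (y := 0) hμ.1 hza ha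
  have hpos : 1 ≤ μ (a - 1) := by
    by_contra h
    push_neg at h
    have h0 : μ (a - 1) = 0 := by omega
    rw [hsplit, show μ (a - 1 - 0) - μ (a - 0) = 0 from by
      simp only [Nat.sub_zero]; omega] at hw1
    simp [blk] at hw1
  have hνeq : ν = fun i => μ i - 1 :=
    frontier_inj hν (inbox_sub hμ) (hC.trans (rotate_eq hμ ha hpos).symm)
  have hsplit2 : hplus a b μ = hplus a b (fun i => μ i - 1) + (TS a b μ).ncard :=
    hplus_split hμ.1 hμ.2.2 hμ.2.1 hpos
  have hTJ := TS_J_card hμ ha hpos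
  have hJK := J_K_card hμ ha hb
  constructor
  · rw [hνeq, hTJ]
    omega
  · rw [hνeq, ← hJK, hTJ]
    omega
end

section
/- Let a and b be coprime positive integers and let μ ∈ R(a,b). Then there exists a unique partition μ⁰ ∈ D(a,b) that can be obtained from μ by iterating the cyclic-shift map C (i.e., μ⁰ = C^k(μ) for some k ≥ 0), and this μ⁰ satisfies |μ⁰| = |μ| + ml_{b,a}(μ). -/
/-- The cyclic-shift relation: `CRel a b μ ν` holds iff `ν = C(μ)`, i.e. `ν` is
the (unique) partition in `R(a,b)` whose frontier is the frontier of `μ`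
cyclically shifted by one step. -/
def CRel (a b : ℕ) (μ ν : ℕ → ℕ) : Prop :=
  InBox a b ν ∧ frontierWord a b ν = (frontierWord a b μ).rotate 1

namespace Stmt17

def seg (a : ℕ) (μ : ℕ → ℕ) (y : ℕ) : List Bool :=
  List.replicate (μ (a - 1 - y) - μ (a - y)) false ++ [true]

def Fw (a : ℕ) (μ : ℕ → ℕ) (k : ℕ) : List Bool := (List.range k).flatMap (seg a μ)

lemma frontier_eq (a b : ℕ) (μ : ℕ → ℕ) :
    frontierWord a b μ = Fw a μ a ++ List.replicate (b - μ 0) false := rfl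

lemma count_tf (l : List Bool) : l.count true + l.count false = l.length := by
  induction l with
  | nil => rfl
  | cons h t ih => cases h <;> simp [List.count_cons] <;> omega

lemma Fw_succ (a : ℕ) (μ : ℕ → ℕ) (k : ℕ) :
    Fw a μ (k + 1) = Fw a μ k ++ seg a μ k := by
  simp [Fw, List.range_succ]

lemma len_Fw {a b : ℕ} {μ : ℕ → ℕ} (hμ : InBox a b μ) {k : ℕ} (hk : k ≤ a) :
    (Fw a μ k).length = k + μ (a - k) := by
  induction k with
  | zero => simp [Fw, hμ.2.2 a le_rfl]
  | succ k ih =>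
      have h1 : μ (a - k) ≤ μ (a - 1 - k) := hμ.1 _ _ (by omega)
      have h2 : a - (k + 1) = a - 1 - k := by omega
      rw [Fw_succ, List.length_append, ih (by omega)]
      simp [seg, h2]
      omega

lemma count_true_Fw (a : ℕ) (μ : ℕ → ℕ) (k : ℕ) : (Fw a μ k).count true = k := by
  induction k with
  | zero => rfl
  | succ k ih => rw [Fw_succ, List.count_append]; simp [seg, ih, List.count_replicate]

lemma count_false_Fw {a b : ℕ} {μ : ℕ → ℕ} (hμ : InBox a b μ) {k : ℕ} (hk : k ≤ a) :
    (Fw a μ k).count false = μ (a - k) := by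
  induction k with
  | zero => simp [Fw, hμ.2.2 a le_rfl]
  | succ k ih =>
      have h1 : μ (a - k) ≤ μ (a - 1 - k) := hμ.1 _ _ (by omega)
      have h2 : a - (k + 1) = a - 1 - k := by omega
      rw [Fw_succ, List.count_append, ih (by omega)]
      simp [seg, h2]
      omega

lemma Fw_prefix {a b : ℕ} (μ : ℕ → ℕ) {k : ℕ} (hk : k ≤ a) :
    Fw a μ k <+: frontierWord a b μ := by
  have h : ∀ m, k ≤ m → Fw a μ k <+: Fw a μ m := by
    intro m hm
    induction m, hm using Nat.le_induction with
    | base => exact List.prefix_refl _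
    | succ m hm ih => rw [Fw_succ]; exact ih.trans (List.prefix_append _ _)
  exact ((h a hk).trans (List.prefix_append _ _))

lemma count_true_frontier {a b : ℕ} {μ : ℕ → ℕ} (hμ : InBox a b μ) :
    (frontierWord a b μ).count true = a := by
  rw [frontier_eq, List.count_append, count_true_Fw]; simp [List.count_replicate]

lemma count_false_frontier {a b : ℕ} {μ : ℕ → ℕ} (hμ : InBox a b μ) :
    (frontierWord a b μ).count false = b := by
  have := hμ.2.1
  rw [frontier_eq, List.count_append, count_false_Fw hμ le_rfl]
  simp
  omega

lemma length_frontier {a b : ℕ} {μ : ℕ → ℕ} (hμ : InBox a b μ) :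
    (frontierWord a b μ).length = a + b := by
  have := count_tf (frontierWord a b μ)
  rw [count_true_frontier hμ, count_false_frontier hμ] at this
  omega

lemma take_q {a b : ℕ} {μ : ℕ → ℕ} (hμ : InBox a b μ) {k : ℕ} (hk : k < a) :
    (frontierWord a b μ).take (k + μ (a - 1 - k)) =
      Fw a μ k ++ List.replicate (μ (a - 1 - k) - μ (a - k)) false := by
  obtain ⟨t, ht⟩ := Fw_prefix (a := a) (b := b) μ (show k + 1 ≤ a by omega)
  have hmono : μ (a - k) ≤ μ (a - 1 - k) := hμ.1 _ _ (by omega)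
  have hlen : (Fw a μ k).length = k + μ (a - k) := len_Fw hμ (by omega)
  have harith : k + μ (a - 1 - k) = (Fw a μ k).length + (μ (a - 1 - k) - μ (a - k)) := by
    rw [hlen]; omega
  have h0 : ∀ s : List Bool,
      (List.replicate (μ (a - 1 - k) - μ (a - k)) false ++ s).take (μ (a - 1 - k) - μ (a - k)) =
        List.replicate (μ (a - 1 - k) - μ (a - k)) false := by
    intro s
    have h := List.take_length_add_append (l₁ := List.replicate (μ (a - 1 - k) - μ (a - k)) false)
      (l₂ := s) 0
    simpa using h
  rw [← ht, Fw_succ, harith, List.append_assoc, List.take_length_add_append, seg,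
    List.append_assoc, h0]

lemma take_q_succ {a b : ℕ} {μ : ℕ → ℕ} (hμ : InBox a b μ) {k : ℕ} (hk : k < a) :
    (frontierWord a b μ).take (k + μ (a - 1 - k) + 1) = Fw a μ (k + 1) := by
  have hp : Fw a μ (k + 1) <+: frontierWord a b μ := Fw_prefix μ (by omega)
  have h2 : a - (k + 1) = a - 1 - k := by omega
  have hl : (Fw a μ (k + 1)).length = k + μ (a - 1 - k) + 1 := by
    rw [len_Fw hμ (by omega), h2]; omega
  rw [List.prefix_iff_eq_take] at hp
  rw [hl] at hp
  exact hp.symm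

lemma levelAt_eq (a b : ℕ) (w : List Bool) {i : ℕ} (hi : i ≤ w.length) :
    levelAt a b w i = ((a : ℤ) + b) * (w.take i).count true - a * i := by
  have h1 := count_tf (w.take i)
  have h2 : (w.take i).length = i := by rw [List.length_take]; omega
  have h3 : ((w.take i).count false : ℤ) = (i : ℤ) - (w.take i).count true := by omega
  rw [levelAt, h3]; ring

lemma levelAt_zero (a b : ℕ) (w : List Bool) : levelAt a b w 0 = 0 := by
  simp [levelAt]

lemma levelAt_length {a b : ℕ} {w : List Bool}
    (hT : w.count true = a) (hF : w.count false = b) :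
    levelAt a b w w.length = 0 := by
  rw [levelAt, List.take_length, hT, hF]; ring

lemma levelAt_rotate (a b : ℕ) (w : List Bool) {k i : ℕ} (hk : k ≤ w.length)
    (hi : i ≤ w.length - k) :
    levelAt a b (w.rotate k) i = levelAt a b w (k + i) - levelAt a b w k := by
  have hrot : w.rotate k = w.drop k ++ w.take k := List.rotate_eq_drop_append_take hk
  have h1 : (w.rotate k).take i = (w.take (k + i)).drop k := by
    rw [hrot, List.take_append_of_le_length (by rw [List.length_drop]; omega),
      List.take_drop]
  have hsplit : ∀ c : Bool, (w.take (k + i)).count c =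
      (w.take k).count c + ((w.take (k + i)).drop k).count c := by
    intro c
    conv_lhs => rw [← List.take_append_drop k (w.take (k + i))]
    rw [List.count_append, List.take_take, min_eq_left (by omega)]
  rw [levelAt, levelAt, levelAt, h1, hsplit true, hsplit false]
  push_cast; ring

lemma minLevel_le {a b : ℕ} (w : List Bool) {i : ℕ} (hi : i ≤ w.length) :
    minLevel a b w ≤ levelAt a b w i := by
  apply Finset.min'_le
  exact Finset.mem_image_of_mem _ (Finset.mem_range.mpr (by omega))

lemma minLevel_nonpos (a b : ℕ) (w : List Bool) : minLevel a b w ≤ 0 := by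
  have := minLevel_le (a := a) (b := b) w (i := 0) (Nat.zero_le _)
  rwa [levelAt_zero] at this

lemma exists_minLevel (a b : ℕ) (w : List Bool) :
    ∃ i ≤ w.length, levelAt a b w i = minLevel a b w := by
  obtain ⟨i, hi, hival⟩ := Finset.mem_image.mp
    (Finset.min'_mem ((Finset.range (w.length + 1)).image fun i => levelAt a b w i)
      (Finset.Nonempty.image Finset.nonempty_range_add_one _))
  exact ⟨i, by have := Finset.mem_range.mp hi; omega, hival⟩

lemma count_take_mono (w : List Bool) (c : Bool) {n m : ℕ} (h : n ≤ m) :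
    (w.take n).count c ≤ (w.take m).count c := by
  have : w.take n = (w.take m).take n := by rw [List.take_take, min_eq_left h]
  rw [this]
  exact (List.take_sublist _ _).count_le c

lemma minLevel_rotate_one {a b : ℕ} {w : List Bool}
    (hT : w.count true = a) (hF : w.count false = b) (hw : w ≠ []) :
    minLevel a b (w.rotate 1) = minLevel a b w - levelAt a b w 1 := by
  have hL : 0 < w.length := List.length_pos_iff.mpr hw
  have hlr : (w.rotate 1).length = w.length := List.length_rotate w 1
  have hperm : (w.rotate 1).Perm w := List.rotate_perm w 1
  have hT' : (w.rotate 1).count true = a := by rw [hperm.count_eq, hT]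
  have hF' : (w.rotate 1).count false = b := by rw [hperm.count_eq, hF]
  have hlev : ∀ i ≤ w.length - 1,
      levelAt a b (w.rotate 1) i = levelAt a b w (1 + i) - levelAt a b w 1 := by
    intro i hi
    exact levelAt_rotate a b w (by omega) hi
  have hLz : levelAt a b w w.length = 0 := levelAt_length hT hF
  have hLz' : levelAt a b (w.rotate 1) (w.rotate 1).length = 0 := levelAt_length hT' hF'
  apply le_antisymm
  · obtain ⟨i, hi, hival⟩ := exists_minLevel a b w
    rcases Nat.eq_zero_or_pos i with h0 | hpos
    · -- use index w.length - 1 in the rotated word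
      have h1 : levelAt a b (w.rotate 1) (w.length - 1) =
          levelAt a b w w.length - levelAt a b w 1 := by
        rw [hlev _ le_rfl]
        congr 2
        omega
      have h2 : minLevel a b (w.rotate 1) ≤ levelAt a b (w.rotate 1) (w.length - 1) :=
        minLevel_le _ (by omega)
      rw [h1, hLz] at h2
      rw [← hival, h0, levelAt_zero]
      omega
    · have h1 : levelAt a b (w.rotate 1) (i - 1) =
          levelAt a b w i - levelAt a b w 1 := by
        rw [hlev _ (by omega)]
        congr 2
        omega
      have h2 : minLevel a b (w.rotate 1) ≤ levelAt a b (w.rotate 1) (i - 1) :=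
        minLevel_le _ (by omega)
      rw [h1, hival] at h2
      exact h2
  · obtain ⟨i, hi, hival⟩ := exists_minLevel a b (w.rotate 1)
    rcases Nat.lt_or_ge i w.length with hlt | hge
    · have h1 : levelAt a b (w.rotate 1) i = levelAt a b w (1 + i) - levelAt a b w 1 :=
        hlev i (by omega)
      have h2 : minLevel a b w ≤ levelAt a b w (1 + i) := minLevel_le _ (by omega)
      rw [← hival, h1]
      omega
    · have hieq : i = w.length := by omega
      have h2 : minLevel a b w ≤ levelAt a b w 1 := minLevel_le _ (by omega)
      rw [← hival, hieq, ← hlr, hLz']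
      omega

lemma minLevel_rotate {a b : ℕ} {w : List Bool}
    (hT : w.count true = a) (hF : w.count false = b) (hw : w ≠ []) {k : ℕ}
    (hk : k ≤ w.length) :
    minLevel a b (w.rotate k) = minLevel a b w - levelAt a b w k := by
  induction k with
  | zero => simp [levelAt_zero]
  | succ k ih =>
      have hrr : w.rotate (k + 1) = (w.rotate k).rotate 1 := by
        rw [List.rotate_rotate]
      have hperm : (w.rotate k).Perm w := List.rotate_perm w k
      have hT' : (w.rotate k).count true = a := by rw [hperm.count_eq, hT]
      have hF' : (w.rotate k).count false = b := by rw [hperm.count_eq, hF]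
      have hw' : w.rotate k ≠ [] := by
        intro h
        apply hw
        have := List.length_rotate w k
        rw [h] at this
        exact List.length_eq_zero_iff.mp this.symm
      have h1 : levelAt a b (w.rotate k) 1 = levelAt a b w (k + 1) - levelAt a b w k :=
        levelAt_rotate a b w (by omega) (by omega)
      rw [hrr, minLevel_rotate_one hT' hF' hw', ih (by omega), h1]
      ring

lemma levelAt_q {a b : ℕ} {μ : ℕ → ℕ} (hμ : InBox a b μ) {k : ℕ} (hk : k < a) :
    levelAt a b (frontierWord a b μ) (k + μ (a - 1 - k)) =
      (b : ℤ) * k - (a : ℤ) * μ (a - 1 - k) := by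
  have hmono : μ (a - k) ≤ μ (a - 1 - k) := hμ.1 _ _ (by omega)
  have hc : μ (a - k) + (μ (a - 1 - k) - μ (a - k)) = μ (a - 1 - k) := by omega
  rw [levelAt, take_q hμ hk, List.count_append, List.count_append, count_true_Fw,
    count_false_Fw hμ hk.le]
  simp [List.count_replicate, hc]

lemma count_true_take_le {a b : ℕ} {μ : ℕ → ℕ} (hμ : InBox a b μ) (i : ℕ) :
    ((frontierWord a b μ).take i).count true ≤ a := by
  calc ((frontierWord a b μ).take i).count true
      ≤ (frontierWord a b μ).count true := (List.take_sublist _ _).count_le _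
    _ = a := count_true_frontier hμ

lemma count_true_bound {a b : ℕ} {μ : ℕ → ℕ} (hμ : InBox a b μ) {k i : ℕ} (hk : k < a)
    (hi : k + μ (a - 1 - k) < i) :
    k + 1 ≤ ((frontierWord a b μ).take i).count true := by
  calc k + 1 = ((frontierWord a b μ).take (k + μ (a - 1 - k) + 1)).count true := by
        rw [take_q_succ hμ hk, count_true_Fw]
    _ ≤ ((frontierWord a b μ).take i).count true := count_take_mono _ _ (by omega)

lemma count_true_bound' {a b : ℕ} {μ : ℕ → ℕ} (hμ : InBox a b μ) {k i : ℕ} (hk : k < a)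
    (hi : i ≤ k + μ (a - 1 - k)) :
    ((frontierWord a b μ).take i).count true ≤ k := by
  calc ((frontierWord a b μ).take i).count true
      ≤ ((frontierWord a b μ).take (k + μ (a - 1 - k))).count true :=
        count_take_mono _ _ hi
    _ = k := by
        rw [take_q hμ hk, List.count_append, count_true_Fw]
        simp [List.count_replicate]

lemma minLevel_eq_zero_of_triangle {a b : ℕ} {μ : ℕ → ℕ} (ha : 0 < a)
    (hμt : InTriangle a b μ) : minLevel a b (frontierWord a b μ) = 0 := by
  obtain ⟨hμ, htri⟩ := hμt
  apply le_antisymm (minLevel_nonpos a b _)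
  apply Finset.le_min'
  intro x hx
  obtain ⟨i, hi, rfl⟩ := Finset.mem_image.mp hx
  have hiL : i ≤ (frontierWord a b μ).length := by
    have := Finset.mem_range.mp hi; omega
  have hL : (frontierWord a b μ).length = a + b := length_frontier hμ
  set t := ((frontierWord a b μ).take i).count true with ht
  have hta : t ≤ a := count_true_take_le hμ i
  rw [levelAt_eq a b _ hiL, ← ht]
  rcases Nat.lt_or_ge t a with hlt | hge
  · -- i ≤ t + μ (a-1-t)
    have hile : i ≤ t + μ (a - 1 - t) := by
      by_contra hcon
      have := count_true_bound (i := i) hμ hlt (by omega)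
      omega
    have htri' : a * μ (a - 1 - t) ≤ b * t := by
      have := htri (a - 1 - t) (by omega)
      have he : a - 1 - (a - 1 - t) = t := by omega
      rwa [he] at this
    have h1 : (a : ℤ) * μ (a - 1 - t) ≤ (b : ℤ) * t := by exact_mod_cast htri'
    have h2 : (i : ℤ) ≤ (t : ℤ) + μ (a - 1 - t) := by exact_mod_cast hile
    nlinarith [Nat.cast_nonneg (α := ℤ) a, Nat.cast_nonneg (α := ℤ) t]
  · have hteq : t = a := by omega
    have h2 : (i : ℤ) ≤ (a : ℤ) + b := by exact_mod_cast (hL ▸ hiL)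
    rw [hteq]
    nlinarith [Nat.cast_nonneg (α := ℤ) a]

lemma triangle_of_minLevel {a b : ℕ} {μ : ℕ → ℕ} (ha : 0 < a) (hμ : InBox a b μ)
    (h : minLevel a b (frontierWord a b μ) = 0) : InTriangle a b μ := by
  refine ⟨hμ, fun i hi => ?_⟩
  set k := a - 1 - i with hkdef
  have hk : k < a := by omega
  have hik : a - 1 - k = i := by omega
  have hμb : μ (a - 1 - k) ≤ b := le_trans (hμ.1 _ _ (Nat.zero_le _)) hμ.2.1
  have hqL : k + μ (a - 1 - k) ≤ (frontierWord a b μ).length := by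
    rw [length_frontier hμ]; omega
  have h0 : (0 : ℤ) ≤ levelAt a b (frontierWord a b μ) (k + μ (a - 1 - k)) := by
    rw [← h]; exact minLevel_le _ hqL
  rw [levelAt_q hμ hk, hik] at h0
  have : (a : ℤ) * μ i ≤ (b : ℤ) * k := by linarith
  have hcast : a * μ i ≤ b * k := by exact_mod_cast this
  rwa [hkdef] at hcast

lemma levelAt_inj {a b : ℕ} (hab : Nat.Coprime a b) {w : List Bool}
    (hT : w.count true = a) (hF : w.count false = b) {k k' : ℕ}
    (hk : k < a + b) (hk' : k' < a + b)
    (h : levelAt a b w k = levelAt a b w k') : k = k' := by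
  have hL : w.length = a + b := by have := count_tf w; omega
  rw [levelAt_eq a b w (by omega), levelAt_eq a b w (by omega)] at h
  have hdvd : ((a : ℤ) + b) ∣ ((a : ℤ) * ((k : ℤ) - k')) :=
    ⟨((w.take k).count true : ℤ) - ((w.take k').count true : ℤ), by linear_combination -h⟩
  have hcop : IsCoprime ((a : ℤ) + b) (a : ℤ) := by
    rw [show ((a : ℤ) + b) = ((a + b : ℕ) : ℤ) by push_cast; ring]
    exact Nat.isCoprime_iff_coprime.mpr
      (by rw [Nat.add_comm]; exact Nat.coprime_add_self_left.mpr (Nat.coprime_comm.mp hab))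
  have hdvd2 : ((a : ℤ) + b) ∣ ((k : ℤ) - k') := hcop.dvd_of_dvd_mul_left hdvd
  rcases Nat.eq_zero_or_pos (a + b) with hz | hpos
  · omega
  · by_contra hne
    have h1 : ((k : ℤ) - k') ≠ 0 := by
      intro hc; apply hne; omega
    have := Int.eq_zero_of_dvd_of_natAbs_lt_natAbs hdvd2 (by omega)
    omega

lemma reconstruct {a b : ℕ} {μ : ℕ → ℕ} (hμ : InBox a b μ) {k : ℕ} (hk : k < a) (n : ℕ) :
    (k + 1 ≤ ((frontierWord a b μ).take n).count true) ↔ k + μ (a - 1 - k) + 1 ≤ n := by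
  constructor
  · intro h
    by_contra hcon
    have := count_true_bound' (i := n) hμ hk (by omega)
    omega
  · intro h
    exact count_true_bound hμ hk (by omega)

lemma frontier_inj {a b : ℕ} (ha : 0 < a) {μ ν : ℕ → ℕ} (hμ : InBox a b μ)
    (hν : InBox a b ν) (h : frontierWord a b μ = frontierWord a b ν) : μ = ν := by
  funext i
  rcases Nat.lt_or_ge i a with hi | hi
  · set k := a - 1 - i with hkdef
    have hka : k < a := by omega
    have hik : a - 1 - k = i := by omega
    have h1 : k + ν (a - 1 - k) + 1 ≤ k + μ (a - 1 - k) + 1 := by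
      rw [← reconstruct hν hka, ← h]
      exact (reconstruct hμ hka _).mpr le_rfl
    have h2 : k + μ (a - 1 - k) + 1 ≤ k + ν (a - 1 - k) + 1 := by
      rw [← reconstruct hμ hka, h]
      exact (reconstruct hν hka _).mpr le_rfl
    rw [hik] at h1 h2
    omega
  · rw [hμ.2.2 i hi, hν.2.2 i hi]

def Cfun (a b : ℕ) (μ : ℕ → ℕ) : ℕ → ℕ :=
  if μ (a - 1) = 0 then fun i => if i = 0 then b else if i < a then μ (i - 1) else 0
  else fun i => if i < a then μ i - 1 else 0

lemma inBox_Cfun {a b : ℕ} {μ : ℕ → ℕ} (ha : 0 < a) (hμ : InBox a b μ) :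
    InBox a b (Cfun a b μ) := by
  obtain ⟨hm, hb0, hz⟩ := hμ
  unfold Cfun
  split_ifs with h0
  · refine ⟨?_, by simp, ?_⟩
    · intro i j hij
      by_cases hi0 : i = 0
      · subst hi0
        simp only [if_pos rfl]
        by_cases hj0 : j = 0
        · simp [hj0]
        · simp only [if_neg hj0]
          split_ifs with hja
          · exact le_trans (hm 0 (j - 1) (Nat.zero_le _)) hb0
          · exact Nat.zero_le _
      · have hj0 : j ≠ 0 := by omega
        simp only [if_neg hi0, if_neg hj0]
        split_ifs with hja hia hia
        · exact hm _ _ (by omega)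
        · omega
        · exact Nat.zero_le _
        · exact Nat.zero_le _
    · intro i hia
      have : i ≠ 0 := by omega
      simp only [if_neg this]
      rw [if_neg (by omega)]
  · refine ⟨?_, ?_, ?_⟩
    · intro i j hij
      dsimp only
      split_ifs with hja hia hia
      · exact Nat.sub_le_sub_right (hm _ _ hij) 1
      · omega
      · exact Nat.zero_le _
      · exact Nat.zero_le _
    · dsimp only
      rw [if_pos ha]
      omega
    · intro i hia
      dsimp only
      rw [if_neg (by omega)]

lemma flatMap_range_congr {f g : ℕ → List Bool} {n : ℕ} (h : ∀ y < n, f y = g y) :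
    (List.range n).flatMap f = (List.range n).flatMap g := by
  unfold List.flatMap
  congr 1
  apply List.map_congr_left
  intro y hy
  exact h y (List.mem_range.mp hy)

lemma flatMap_range_succ_head (f : ℕ → List Bool) (n : ℕ) :
    (List.range (n + 1)).flatMap f = f 0 ++ (List.range n).flatMap (fun y => f (y + 1)) := by
  rw [List.range_succ_eq_map, List.flatMap_cons, List.flatMap_map]

lemma frontier_Cfun {a b : ℕ} {μ : ℕ → ℕ} (ha : 0 < a) (hμ : InBox a b μ) :
    frontierWord a b (Cfun a b μ) = (frontierWord a b μ).rotate 1 := by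
  obtain ⟨a', rfl⟩ : ∃ a', a = a' + 1 := ⟨a - 1, by omega⟩
  obtain ⟨hm, hb0, hz⟩ := hμ
  have hz1 : μ (a' + 1) = 0 := hz _ le_rfl
  have hrot : ∀ (x : Bool) (t : List Bool), (x :: t).rotate 1 = t ++ [x] := by
    intro x t
    rw [List.rotate_cons_succ, List.rotate_zero]
  unfold Cfun
  simp only [Nat.add_sub_cancel]
  split_ifs with h0
  · -- μ a' = 0 : move an N from front to back
    set ν : ℕ → ℕ := fun i => if i = 0 then b else if i < a' + 1 then μ (i - 1) else 0
      with hνdef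
    have hν0 : ν 0 = b := by simp [hνdef]
    have hνmid : ∀ i, i ≠ 0 → i < a' + 1 → ν i = μ (i - 1) := by
      intro i h1 h2
      rw [hνdef]
      simp only [if_neg h1, if_pos h2]
    have hνtop : ∀ i, a' + 1 ≤ i → ν i = 0 := by
      intro i h1
      rw [hνdef]
      simp only [if_neg (by omega : ¬ i = 0), if_neg (by omega : ¬ i < a' + 1)]
    have hw : frontierWord (a' + 1) b μ =
        true :: ((List.range a').flatMap (fun y => seg (a' + 1) μ (y + 1)) ++
          List.replicate (b - μ 0) false) := by
      rw [frontier_eq, Fw, flatMap_range_succ_head]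
      have hseg0 : seg (a' + 1) μ 0 = [true] := by
        rw [seg, Nat.add_sub_cancel]
        simp only [Nat.sub_zero]
        rw [h0]
        simp
      rw [hseg0]
      simp [List.append_assoc]
    rcases Nat.eq_zero_or_pos a' with rfl | ha'
    · -- a = 1
      have e1 : seg (0 + 1) ν 0 = List.replicate b false ++ [true] := by
        rw [seg]
        norm_num
        rw [hνtop 1 le_rfl, hν0, Nat.sub_zero]
      rw [frontier_eq, Fw_succ, e1, hν0, Nat.sub_self, hw, hrot]
      simp [Fw, h0]
    · -- a ≥ 2
      have hsegtop : seg (a' + 1) ν a' = List.replicate (b - μ 0) false ++ [true] := by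
        rw [seg, show a' + 1 - 1 - a' = 0 from by omega,
          show a' + 1 - a' = 1 from by omega, hν0, hνmid 1 (by omega) (by omega)]
      have hsegmid : ∀ y, y < a' → seg (a' + 1) ν y = seg (a' + 1) μ (y + 1) := by
        intro y hy
        have e1 : ν (a' - y) = μ (a' - 1 - y) := by
          rw [hνmid _ (by omega) (by omega)]
          congr 1
          omega
        have e2 : ν (a' + 1 - y) = μ (a' - y) := by
          rcases Nat.eq_zero_or_pos y with rfl | hy1
          · simp only [Nat.sub_zero]
            rw [hνtop _ le_rfl, h0]
          · rw [hνmid _ (by omega) (by omega)]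
            congr 1
            omega
        rw [seg, seg, show a' + 1 - 1 - y = a' - y from by omega,
          show a' + 1 - 1 - (y + 1) = a' - 1 - y from by omega,
          show a' + 1 - (y + 1) = a' - y from by omega, e1, e2]
      rw [frontier_eq, Fw_succ, Fw, flatMap_range_congr hsegmid, hsegtop, hν0,
        Nat.sub_self, hw, hrot]
      simp [List.append_assoc]
  · -- μ a' ≠ 0 : move an E from front to back
    set ν : ℕ → ℕ := fun i => if i < a' + 1 then μ i - 1 else 0 with hνdef
    have hνval : ∀ i, i < a' + 1 → ν i = μ i - 1 := by
      intro i h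
      rw [hνdef]
      simp only [if_pos h]
    have hνtop : ∀ i, a' + 1 ≤ i → ν i = 0 := by
      intro i h
      rw [hνdef]
      simp only [if_neg (by omega : ¬ i < a' + 1)]
    obtain ⟨m, hmval⟩ : ∃ m, μ a' = m + 1 := ⟨μ a' - 1, by omega⟩
    have hμ01 : 1 ≤ μ 0 := le_trans (show (1:ℕ) ≤ μ a' from by omega) (hm 0 a' (Nat.zero_le _))
    have hw : frontierWord (a' + 1) b μ =
        false :: ((List.replicate m false ++ [true]) ++
          ((List.range a').flatMap (fun y => seg (a' + 1) μ (y + 1)) ++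
            List.replicate (b - μ 0) false)) := by
      rw [frontier_eq, Fw, flatMap_range_succ_head]
      have hseg0 : seg (a' + 1) μ 0 = false :: (List.replicate m false ++ [true]) := by
        rw [seg, Nat.add_sub_cancel]
        simp only [Nat.sub_zero]
        rw [hz1, Nat.sub_zero, hmval, List.replicate_succ]
        simp
      rw [hseg0]
      simp [List.append_assoc]
    have hsegtop : seg (a' + 1) ν 0 = List.replicate m false ++ [true] := by
      rw [seg, Nat.add_sub_cancel]
      simp only [Nat.sub_zero]
      rw [hνtop _ le_rfl, Nat.sub_zero, hνval _ (by omega), hmval]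
      simp
    have hsegmid : ∀ y, y < a' → seg (a' + 1) ν (y + 1) = seg (a' + 1) μ (y + 1) := by
      intro y hy
      have hb1 : 1 ≤ μ (a' - y) := le_trans (show (1:ℕ) ≤ μ a' from by omega) (hm (a' - y) a' (by omega))
      rw [seg, seg, show a' + 1 - 1 - (y + 1) = a' - 1 - y from by omega,
        show a' + 1 - (y + 1) = a' - y from by omega,
        hνval _ (by omega), hνval _ (by omega),
        show μ (a' - 1 - y) - 1 - (μ (a' - y) - 1) = μ (a' - 1 - y) - μ (a' - y)
          from by omega]
    have hTν : b - ν 0 = (b - μ 0) + 1 := by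
      rw [hνval 0 (by omega)]
      omega
    rw [frontier_eq, Fw, flatMap_range_succ_head, flatMap_range_congr hsegmid, hsegtop,
      hTν, List.replicate_succ', hw, hrot]
    simp [List.append_assoc]

lemma levelAt_one {a b : ℕ} {μ : ℕ → ℕ} (ha : 0 < a) (hμ : InBox a b μ) :
    levelAt a b (frontierWord a b μ) 1 =
      if μ (a - 1) = 0 then (b : ℤ) else -(a : ℤ) := by
  split_ifs with h0
  · have h := take_q_succ hμ (k := 0) ha
    have e : (0 : ℕ) + μ (a - 1 - 0) + 1 = 1 := by simp [Nat.sub_zero, h0]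
    rw [e] at h
    rw [levelAt, h, count_true_Fw, count_false_Fw hμ ha]
    rw [show a - 1 = a - 1 from rfl] at h0
    rw [h0]
    simp
  · have hmpos : 0 < μ (a - 1 - 0) := by simp only [Nat.sub_zero]; omega
    have h := take_q hμ (k := 0) ha
    rw [Nat.zero_add] at h
    have h1 : (frontierWord a b μ).take 1 = [false] := by
      have h2 : (frontierWord a b μ).take 1 =
          ((frontierWord a b μ).take (μ (a - 1 - 0))).take 1 := by
        rw [List.take_take, min_eq_left (by omega)]
      rw [h2, h]
      have hz2 : μ (a - 0) = 0 := hμ.2.2 _ (by omega)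
      rw [hz2, Nat.sub_zero, show (Fw a μ 0) = ([] : List Bool) from rfl,
        List.nil_append, List.take_replicate, min_eq_left (by omega),
        show List.replicate 1 false = [false] from rfl]
    rw [levelAt, h1]
    simp

lemma sum_Cfun {a b : ℕ} {μ : ℕ → ℕ} (ha : 0 < a) (hμ : InBox a b μ) :
    (∑ t ∈ Finset.range a, (Cfun a b μ t : ℤ)) =
      (∑ t ∈ Finset.range a, (μ t : ℤ)) + levelAt a b (frontierWord a b μ) 1 := by
  rw [levelAt_one ha hμ]
  obtain ⟨a', rfl⟩ : ∃ a', a = a' + 1 := ⟨a - 1, by omega⟩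
  obtain ⟨hm, hb0, hz⟩ := hμ
  unfold Cfun
  simp only [Nat.add_sub_cancel]
  split_ifs with h0
  · rw [Finset.sum_range_succ']
    rw [Finset.sum_range_succ (f := fun t => (μ t : ℤ))]
    rw [h0]
    have hcg : ∀ t ∈ Finset.range a',
        (((fun i => if i = 0 then b else if i < a' + 1 then μ (i - 1) else 0) (t + 1) : ℕ)
          : ℤ) = (μ t : ℤ) := by
      intro t ht
      have h1 : t + 1 ≠ 0 := by omega
      have h2 : t + 1 < a' + 1 := by have := Finset.mem_range.mp ht; omega
      simp only [if_neg h1, if_pos h2, Nat.add_sub_cancel]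
    rw [Finset.sum_congr rfl hcg]
    norm_num
  · have h1 : ∀ t ∈ Finset.range (a' + 1),
        (((fun i => if i < a' + 1 then μ i - 1 else 0) t : ℕ) : ℤ) = (μ t : ℤ) - 1 := by
      intro t ht
      have h2 : t < a' + 1 := Finset.mem_range.mp ht
      simp only [if_pos h2]
      have h3 : 1 ≤ μ t := le_trans (show (1 : ℕ) ≤ μ a' from by omega)
        (hm t a' (by omega))
      push_cast [h3]
      ring
    rw [Finset.sum_congr rfl h1, Finset.sum_sub_distrib]
    simp [Finset.card_range]
    ring

lemma crel_Cfun {a b : ℕ} {μ : ℕ → ℕ} (ha : 0 < a) (hμ : InBox a b μ) :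
    CRel a b μ (Cfun a b μ) :=
  ⟨inBox_Cfun ha hμ, frontier_Cfun ha hμ⟩

lemma crel_eq {a b : ℕ} (ha : 0 < a) {μ ν : ℕ → ℕ} (hμ : InBox a b μ)
    (h : CRel a b μ ν) : ν = Cfun a b μ :=
  frontier_inj ha h.1 (inBox_Cfun ha hμ) (h.2.trans (frontier_Cfun ha hμ).symm)

lemma chain_inv {a b : ℕ} (ha : 0 < a) (hb : 0 < b) {μ ν : ℕ → ℕ} (hμ : InBox a b μ)
    (h : Relation.ReflTransGen (CRel a b) μ ν) :
    InBox a b ν ∧ (∃ k, frontierWord a b ν = (frontierWord a b μ).rotate k) ∧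
    ((∑ t ∈ Finset.range a, (ν t : ℤ)) + minLevel a b (frontierWord a b ν) =
      (∑ t ∈ Finset.range a, (μ t : ℤ)) + minLevel a b (frontierWord a b μ)) := by
  induction h with
  | refl => exact ⟨hμ, ⟨0, by simp⟩, rfl⟩
  | @tail ρ ν' h1 h2 ih =>
      obtain ⟨hbox, ⟨k, hk⟩, hsum⟩ := ih
      have hstep : ν' = Cfun a b ρ := crel_eq ha hbox h2
      have hbox' : InBox a b ν' := h2.1
      have hne : frontierWord a b ρ ≠ [] := by
        have hl := length_frontier hbox
        intro hc
        rw [hc] at hl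
        simp at hl
        omega
      have hrotmin : minLevel a b (frontierWord a b ν') =
          minLevel a b (frontierWord a b ρ) - levelAt a b (frontierWord a b ρ) 1 := by
        rw [h2.2]
        exact minLevel_rotate_one (count_true_frontier hbox) (count_false_frontier hbox) hne
      have hsum' : (∑ t ∈ Finset.range a, (ν' t : ℤ)) =
          (∑ t ∈ Finset.range a, (ρ t : ℤ)) + levelAt a b (frontierWord a b ρ) 1 := by
        rw [hstep]
        exact sum_Cfun ha hbox
      refine ⟨hbox', ⟨k + 1, ?_⟩, ?_⟩
      · rw [h2.2, hk, List.rotate_rotate]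
      · rw [hsum', hrotmin]
        linarith [hsum]

lemma iterate_chain {a b : ℕ} (ha : 0 < a) {μ : ℕ → ℕ} (hμ : InBox a b μ) (k : ℕ) :
    InBox a b ((Cfun a b)^[k] μ) ∧
    Relation.ReflTransGen (CRel a b) μ ((Cfun a b)^[k] μ) ∧
    frontierWord a b ((Cfun a b)^[k] μ) = (frontierWord a b μ).rotate k := by
  induction k with
  | zero => exact ⟨hμ, Relation.ReflTransGen.refl, by simp⟩
  | succ k ih =>
      obtain ⟨h1, h2, h3⟩ := ih
      rw [Function.iterate_succ_apply']
      exact ⟨inBox_Cfun ha h1, h2.tail (crel_Cfun ha h1),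
        by rw [frontier_Cfun ha h1, h3, List.rotate_rotate]⟩

end Stmt17

open Stmt17

/-- for coprime positive `a, b` and `μ ∈ R(a,b)`, there is a
unique `μ⁰ ∈ D(a,b)` obtainable from `μ` by iterating the cyclic-shift map `C`
(i.e. with `Relation.ReflTransGen (CRel a b) μ μ⁰`), and every such `μ⁰`
satisfies `|μ⁰| = |μ| + ml_{b,a}(μ)`. -/
theorem stmt17 (a b : ℕ) (ha : 0 < a) (hb : 0 < b) (hab : Nat.Coprime a b)
    (μ : ℕ → ℕ) (hμ : InBox a b μ) :
    (∃! ν : ℕ → ℕ, InTriangle a b ν ∧ Relation.ReflTransGen (CRel a b) μ ν) ∧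
    (∀ ν : ℕ → ℕ, InTriangle a b ν → Relation.ReflTransGen (CRel a b) μ ν →
      (∑ t ∈ Finset.range a, (ν t : ℤ)) =
        (∑ t ∈ Finset.range a, (μ t : ℤ)) + minLevel a b (frontierWord a b μ)) := by

  have hT : (frontierWord a b μ).count true = a := count_true_frontier hμ
  have hF : (frontierWord a b μ).count false = b := count_false_frontier hμ
  have hL : (frontierWord a b μ).length = a + b := length_frontier hμ
  have hne : frontierWord a b μ ≠ [] := by
    intro hc
    rw [hc] at hL
    simp at hL
    omega
  obtain ⟨m, hmle, hmval⟩ := exists_minLevel a b (frontierWord a b μ)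
  obtain ⟨hbox₀, hrtg₀, hfront₀⟩ := iterate_chain ha hμ m
  have hmin₀ : minLevel a b (frontierWord a b ((Cfun a b)^[m] μ)) = 0 := by
    rw [hfront₀, minLevel_rotate hT hF hne hmle, hmval]
    ring
  have htri₀ : InTriangle a b ((Cfun a b)^[m] μ) := triangle_of_minLevel ha hbox₀ hmin₀
  have huniq : ∀ ν : ℕ → ℕ, InTriangle a b ν → Relation.ReflTransGen (CRel a b) μ ν →
      ν = (Cfun a b)^[m] μ := by
    intro ν htri hrtg
    obtain ⟨hbox, ⟨k, hk⟩, _⟩ := chain_inv ha hb hμ hrtg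
    have hk' : frontierWord a b ν = (frontierWord a b μ).rotate (k % (a + b)) := by
      rw [hk, ← hL, List.rotate_mod]
    have hmink : minLevel a b (frontierWord a b ν) = 0 :=
      minLevel_eq_zero_of_triangle ha htri
    have hlevk : levelAt a b (frontierWord a b μ) (k % (a + b)) =
        minLevel a b (frontierWord a b μ) := by
      have hthis := minLevel_rotate hT hF hne (k := k % (a + b))
        (by rw [hL]; exact le_of_lt (Nat.mod_lt _ (by omega)))
      rw [← hk', hmink] at hthis
      linarith
    have hm' : levelAt a b (frontierWord a b μ) (m % (a + b)) =
        minLevel a b (frontierWord a b μ) := by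
      rcases Nat.lt_or_ge m (a + b) with h1 | h1
      · rw [Nat.mod_eq_of_lt h1]
        exact hmval
      · have hm2 : m = a + b := by omega
        have hmz : m % (a + b) = 0 := by rw [hm2]; exact Nat.mod_self _
        rw [hmz, levelAt_zero, ← hmval, hm2, ← hL, levelAt_length hT hF]
    have hkm : k % (a + b) = m % (a + b) :=
      levelAt_inj hab hT hF (Nat.mod_lt _ (by omega)) (Nat.mod_lt _ (by omega))
        (by rw [hlevk, hm'])
    have hfeq : frontierWord a b ν = frontierWord a b ((Cfun a b)^[m] μ) := by
      rw [hk', hkm, hfront₀, ← hL, List.rotate_mod]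
    exact frontier_inj ha hbox hbox₀ hfeq
  constructor
  · exact ⟨(Cfun a b)^[m] μ, ⟨htri₀, hrtg₀⟩, fun ν hν => huniq ν hν.1 hν.2⟩
  · intro ν htri hrtg
    obtain ⟨hbox, _, hsum⟩ := chain_inv ha hb hμ hrtg
    rw [minLevel_eq_zero_of_triangle ha htri] at hsum
    linarith
end
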